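/- arXiv:1006.5397 — 5 statements merged into one kernel-verified Lean document; each statement's English description precedes it below -/
import Mathlib

section
/- The Razak building block A(n,n') contains no nonzero projections: if p ∈ A(n,n') satisfies p = p* and p·p = p, then p = 0. -/
open scoped Matrix.Norms.L2Operator ComplexOrder
open Filter MeasureTheory

noncomputable section

open scoped Matrix

/-- The unit interval `[0,1]`. -/
abbrev I01 : Type := unitInterval

/-- Square complex matrices of size `N`. -/
abbrev Mat (N : ℕ) : Type := Matrix (Fin N) (Fin N) ℂ

/-- Block-diagonal matrix with `m` diagonal blocks of size `k` (block `0` in the upper left),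
realized as an `N × N` matrix, where `h : k * m = N`. -/
def cdiag {k m N : ℕ} (h : k * m = N) (blocks : Fin m → Mat k) : Mat N :=
  Matrix.reindex (finProdFinEquiv.trans (finCongr h)) (finProdFinEquiv.trans (finCongr h))
    (Matrix.blockDiagonal blocks)

/-- The Razak building block `A(n, n')` with `n' = n * (a + 1)`, realized as a subset of
`C([0,1], M_N(ℂ))` where `h : n * (a + 1) = N`: those continuous matrix-valued functions `f`
for which there is `c ∈ M_n(ℂ)` with `f 0 = diag(c, …, c, 0_n)` (`a` copies of `c`) and
`f 1 = diag(c, …, c)` (`a + 1` copies of `c`). -/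
def razakA (n a : ℕ) {N : ℕ} (h : n * (a + 1) = N) : Set C(I01, Mat N) :=
  {f | ∃ c : Mat n,
    f 0 = cdiag h (fun i : Fin (a + 1) => if (i : ℕ) < a then c else 0) ∧
    f 1 = cdiag h (fun _ : Fin (a + 1) => c)}

/-- The normalized trace of a square complex matrix. -/
def ntr {N : ℕ} (M : Mat N) : ℂ := M.trace / N

/-- The trace of a hermitian idempotent complex matrix is a natural number. -/
lemma trace_eq_nat_of_proj {N : ℕ} {A : Mat N} (hA : A.IsHermitian) (h2 : A * A = A) :
    ∃ k : ℕ, A.trace = k := by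
  classical
  -- trace equals sum of eigenvalues
  have htr : A.trace = ∑ i, (hA.eigenvalues i : ℂ) := by
    exact hA.trace_eq_sum_eigenvalues
  -- each eigenvalue is 0 or 1
  have hev : ∀ i, hA.eigenvalues i = 0 ∨ hA.eigenvalues i = 1 := by
    intro i
    have hv := hA.mulVec_eigenvectorBasis i
    have hvne : ⇑(hA.eigenvectorBasis i) ≠ 0 := by
      intro h
      exact hA.eigenvectorBasis.orthonormal.ne_zero i (by ext x; exact congrFun h x)
    have h2v : A *ᵥ (A *ᵥ ⇑(hA.eigenvectorBasis i)) = A *ᵥ ⇑(hA.eigenvectorBasis i) := by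
      rw [Matrix.mulVec_mulVec, h2]
    rw [hv, Matrix.mulVec_smul, hv, smul_smul] at h2v
    have hz : (hA.eigenvalues i * hA.eigenvalues i - hA.eigenvalues i) •
        ⇑(hA.eigenvectorBasis i) = 0 := by
      rw [sub_smul, h2v, sub_self]
    rcases smul_eq_zero.mp hz with h | h
    · have := sub_eq_zero.mp h
      rcases mul_eq_zero.mp (by linear_combination this : hA.eigenvalues i *
        (hA.eigenvalues i - 1) = 0) with h' | h'
      · exact Or.inl h'
      · exact Or.inr (by linarith [sub_eq_zero.mp h'])
    · exact absurd h hvne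
  refine ⟨(Finset.univ.filter fun i => hA.eigenvalues i = 1).card, ?_⟩
  rw [htr]
  have : ∀ i ∈ Finset.univ, (hA.eigenvalues i : ℂ) =
      if hA.eigenvalues i = 1 then (1 : ℂ) else 0 := by
    intro i _
    rcases hev i with h | h <;> simp [h]
  rw [Finset.sum_congr rfl this, Finset.sum_boole]

/-- A hermitian idempotent complex matrix with zero trace is zero. -/
lemma eq_zero_of_trace_zero {N : ℕ} {A : Mat N} (hA : A.IsHermitian) (h2 : A * A = A)
    (ht : A.trace = 0) : A = 0 := by
  have key : Matrix.trace (Aᴴ * A) = 0 := by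
    rw [show Aᴴ = A from hA, h2, ht]
  have hdiagform : ∀ j, (Aᴴ * A) j j =
      dotProduct (star fun i => A i j) (fun i => A i j) := by
    intro j
    simp [Matrix.mul_apply, Matrix.conjTranspose_apply, dotProduct]
  have hnn : ∀ j ∈ Finset.univ, 0 ≤ (Aᴴ * A) j j := by
    intro j _
    rw [hdiagform j]
    exact dotProduct_star_self_nonneg _
  have hzero : ∀ j ∈ Finset.univ, (Aᴴ * A) j j = 0 :=
    (Finset.sum_eq_zero_iff_of_nonneg hnn).mp key
  ext i j
  have := hzero j (Finset.mem_univ j)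
  rw [hdiagform j] at this
  have := dotProduct_star_self_eq_zero.mp this
  exact congrFun this i

/-- Trace of a `cdiag`. -/
lemma trace_cdiag {k m N : ℕ} (h : k * m = N) (blocks : Fin m → Mat k) :
    (cdiag h blocks).trace = ∑ i, (blocks i).trace := by
  unfold cdiag
  rw [Matrix.reindex_apply, ← Matrix.trace_blockDiagonal]
  exact Equiv.sum_comp (finProdFinEquiv.trans (finCongr h)).symm
    (fun j => Matrix.blockDiagonal blocks j j)

lemma nat_ne_nat_add_half (k m : ℕ) : (k : ℝ) ≠ (m : ℝ) + 1 / 2 := by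
  intro h
  have h2 : ((2 * k : ℕ) : ℝ) = ((2 * m + 1 : ℕ) : ℝ) := by push_cast; linarith
  have := Nat.cast_injective (R := ℝ) h2
  omega

/-- A continuous real function with natural-number values is constant on `[0, b]`. -/
lemma const_of_nat_valued {F : ℝ → ℝ} (hF : Continuous F)
    (hnat : ∀ x, ∃ k : ℕ, F x = k) {b : ℝ} (hb : 0 ≤ b) : F b = F 0 := by
  obtain ⟨k0, h0⟩ := hnat 0
  obtain ⟨kb, hb'⟩ := hnat b
  rcases lt_trichotomy (F 0) (F b) with hlt | heq | hgt
  · exfalso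
    have hk : k0 < kb := by
      have := hlt; rw [h0, hb'] at this; exact_mod_cast this
    have hmem : F 0 + 1 / 2 ∈ Set.Icc (F 0) (F b) := by
      constructor
      · linarith
      · rw [h0, hb']
        have : (k0 : ℝ) + 1 ≤ kb := by exact_mod_cast hk
        linarith
    obtain ⟨x, _, hx⟩ := intermediate_value_Icc hb (hF.continuousOn) hmem
    obtain ⟨kx, hkx⟩ := hnat x
    rw [hkx, h0] at hx
    exact nat_ne_nat_add_half kx k0 hx
  · exact heq.symm
  · exfalso
    have hk : kb < k0 := by
      have := hgt; rw [h0, hb'] at this; exact_mod_cast this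
    have hmem : F b + 1 / 2 ∈ Set.Icc (F b) (F 0) := by
      constructor
      · linarith
      · rw [h0, hb']
        have : (kb : ℝ) + 1 ≤ k0 := by exact_mod_cast hk
        linarith
    obtain ⟨x, _, hx⟩ := intermediate_value_Icc' hb (hF.continuousOn) hmem
    obtain ⟨kx, hkx⟩ := hnat x
    rw [hkx, hb'] at hx
    exact nat_ne_nat_add_half kx kb hx

/-- The Razak building block `A(n,n')` contains no nonzero projections. -/
theorem razak_building_block_no_nonzero_projections (n a : ℕ) (hn : 0 < n) (ha : 0 < a)
    (p : C(I01, Mat (n * (a + 1)))) (hp : p ∈ razakA n a rfl)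
    (hsa : star p = p) (hidem : p * p = p) : p = 0 := by
  classical
  obtain ⟨c, hc0, hc1⟩ := hp
  -- pointwise hermitian and idempotent
  have hherm : ∀ t : I01, (p t).IsHermitian := by
    intro t
    have := congrArg (fun q : C(I01, Mat (n * (a + 1))) => q t) hsa
    exact this
  have hmul : ∀ t : I01, (p t) * (p t) = p t := by
    intro t
    exact congrArg (fun q : C(I01, Mat (n * (a + 1))) => q t) hidem
  have hnatt : ∀ t : I01, ∃ k : ℕ, (p t).trace = k :=
    fun t => trace_eq_nat_of_proj (hherm t) (hmul t)
  -- the real-valued trace function, extended to ℝ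
  set F : ℝ → ℝ := fun x => ((p (Set.projIcc 0 1 zero_le_one x)).trace).re with hF_def
  have hFcont : Continuous F := by
    apply Complex.continuous_re.comp
    exact ((continuous_id.matrix_trace).comp p.continuous).comp continuous_projIcc
  have hFnat : ∀ x, ∃ k : ℕ, F x = k := by
    intro x
    obtain ⟨k, hk⟩ := hnatt (Set.projIcc 0 1 zero_le_one x)
    exact ⟨k, by simp [hF_def, hk]⟩
  have hproj0 : Set.projIcc (0 : ℝ) 1 zero_le_one 0 = (0 : I01) := by
    rw [Set.projIcc_left]; rfl
  have hproj1 : Set.projIcc (0 : ℝ) 1 zero_le_one 1 = (1 : I01) := by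
    rw [Set.projIcc_right]; rfl
  -- traces at the endpoints
  have htr0 : (p 0).trace = (a : ℂ) * c.trace := by
    rw [hc0, trace_cdiag]
    rw [Fin.sum_univ_castSucc]
    simp only [Fin.coe_castSucc, Fin.is_lt, if_true, Fin.val_last, lt_irrefl, if_false]
    simp [Finset.sum_const, nsmul_eq_mul]
  have htr1 : (p 1).trace = ((a : ℂ) + 1) * c.trace := by
    rw [hc1, trace_cdiag]
    simp [Finset.sum_const, nsmul_eq_mul]
  -- F 1 = F 0 by constancy
  have hconst1 : F 1 = F 0 := const_of_nat_valued hFcont hFnat zero_le_one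
  -- trace of p at endpoints are natural numbers
  obtain ⟨k0, hk0⟩ := hnatt 0
  obtain ⟨k1, hk1⟩ := hnatt 1
  have hF0 : F 0 = k0 := by simp [hF_def, hproj0, hk0]
  have hF1 : F 1 = k1 := by simp [hF_def, hproj1, hk1]
  have hk01 : k1 = k0 := by
    have : (k1 : ℝ) = k0 := by rw [← hF0, ← hF1, hconst1]
    exact_mod_cast this
  -- trace c = 0
  have hctr : c.trace = 0 := by
    have e0 : (a : ℂ) * c.trace = (k0 : ℂ) := by rw [← htr0, hk0]
    have e1 : ((a : ℂ) + 1) * c.trace = (k0 : ℂ) := by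
      rw [← htr1, hk1]; exact_mod_cast congrArg (fun k : ℕ => (k : ℂ)) hk01
    have : c.trace = 0 := by linear_combination e1 - e0
    exact this
  -- hence F 0 = 0
  have hk0z : (k0 : ℂ) = 0 := by rw [← hk0, htr0, hctr, mul_zero]
  have hF0z : F 0 = 0 := by
    rw [hF0]
    exact_mod_cast congrArg Complex.re hk0z
  -- conclude: trace (p t) = 0 for every t, hence p t = 0
  ext t i j
  have htmem : (t : ℝ) ∈ Set.Icc (0 : ℝ) 1 := t.2
  have hprojt : Set.projIcc (0 : ℝ) 1 zero_le_one (t : ℝ) = t := by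
    rw [Set.projIcc_of_mem _ htmem]
  have hFt : F t = ((p t).trace).re := by simp [hF_def, hprojt]
  have hFt0 : F t = 0 := by
    rw [const_of_nat_valued hFcont hFnat t.2.1, hF0z]
  obtain ⟨k, hk⟩ := hnatt t
  have hkz : (k : ℝ) = 0 := by
    rw [← hFt0, hFt, hk, Complex.natCast_re]
  have : (p t).trace = 0 := by
    rw [hk]
    exact_mod_cast hkz
  have hz := eq_zero_of_trace_zero (hherm t) (hmul t) this
  simp [hz]

end
end

section
/- For every positive integer k, the algebra of k×k matrices over the Razak building block A(n,n') is ⋆-isomorphic to the Razak building block A(kn, kn'): there exists a bijective ⋆-algebra homomorphism from M_k(A(n,n')) onto A(kn, (a+1)·kn). -/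
open scoped Matrix.Norms.L2Operator ComplexOrder
open Filter MeasureTheory

noncomputable section

namespace RazakAux

def ek (n k : ℕ) : Fin k × Fin n ≃ Fin (k * n) :=
  (Equiv.prodComm (Fin k) (Fin n)).trans (finProdFinEquiv.trans (finCongr (Nat.mul_comm n k)))

def EE (n a k : ℕ) : Fin k × Fin (n * (a + 1)) ≃ Fin (k * n * (a + 1)) :=
  ((Equiv.refl (Fin k)).prodCongr finProdFinEquiv.symm).trans <|
    (Equiv.prodAssoc (Fin k) (Fin n) (Fin (a + 1))).symm.trans <|
      ((ek n k).prodCongr (Equiv.refl (Fin (a + 1)))).trans finProdFinEquiv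

lemma EE_apply (n a k : ℕ) (u : Fin k) (s : Fin n) (b : Fin (a + 1)) :
    EE n a k (u, finProdFinEquiv (s, b)) = finProdFinEquiv (ek n k (u, s), b) := by
  simp [EE, Equiv.prodCongr_apply, Equiv.prodAssoc]

lemma EE_symm_apply (n a k : ℕ) (u : Fin k) (s : Fin n) (b : Fin (a + 1)) :
    (EE n a k).symm (finProdFinEquiv (ek n k (u, s), b)) = (u, finProdFinEquiv (s, b)) := by
  rw [← EE_apply, Equiv.symm_apply_apply]

lemma cdiag_apply {km m : ℕ} (blocks : Fin m → Mat km) (i j : Fin km) (b c : Fin m) :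
    cdiag rfl blocks (finProdFinEquiv (i, b)) (finProdFinEquiv (j, c)) =
      if b = c then blocks b i j else 0 := by
  simp [cdiag, Matrix.blockDiagonal_apply, finCongr_refl]

def Phi (n a k : ℕ) (M : Matrix (Fin k) (Fin k) C(I01, Mat (n * (a + 1)))) :
    C(I01, Mat (k * n * (a + 1))) :=
  ⟨fun t => Matrix.of fun p q =>
      M ((EE n a k).symm p).1 ((EE n a k).symm q).1 t ((EE n a k).symm p).2 ((EE n a k).symm q).2,
    continuous_matrix fun p q =>
      (continuous_apply ((EE n a k).symm q).2).comp <|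
        (continuous_apply ((EE n a k).symm p).2).comp
          (M ((EE n a k).symm p).1 ((EE n a k).symm q).1).continuous⟩

end RazakAux

/-- `M_k(A(n,n'))` is ⋆-isomorphic to the Razak building block `A(kn, kn')`:
there is a map `Φ` which is a ⋆-algebra homomorphism on the `k × k` matrices with entries in
`A(n,n')` and restricts to a bijection from `M_k(A(n,n'))` onto `A(kn, (a+1)·kn)`. -/
theorem matrices_over_razak_building_block (n a k : ℕ) (hn : 0 < n) (ha : 0 < a) (hk : 0 < k) :
    ∃ Φ : Matrix (Fin k) (Fin k) C(I01, Mat (n * (a + 1))) → C(I01, Mat (k * n * (a + 1))),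
      (∀ M N, (∀ i j, M i j ∈ razakA n a rfl) → (∀ i j, N i j ∈ razakA n a rfl) →
        Φ (M + N) = Φ M + Φ N) ∧
      (∀ (z : ℂ) (M), (∀ i j, M i j ∈ razakA n a rfl) → Φ (z • M) = z • Φ M) ∧
      (∀ M N, (∀ i j, M i j ∈ razakA n a rfl) → (∀ i j, N i j ∈ razakA n a rfl) →
        Φ (M * N) = Φ M * Φ N) ∧
      (∀ M, (∀ i j, M i j ∈ razakA n a rfl) → Φ (star M) = star (Φ M)) ∧
      (∀ M, (∀ i j, M i j ∈ razakA n a rfl) → Φ M ∈ razakA (k * n) a rfl) ∧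
      (∀ M N, (∀ i j, M i j ∈ razakA n a rfl) → (∀ i j, N i j ∈ razakA n a rfl) →
        Φ M = Φ N → M = N) ∧
      (∀ g ∈ razakA (k * n) a rfl, ∃ M, (∀ i j, M i j ∈ razakA n a rfl) ∧ Φ M = g) := by
  classical
  refine ⟨RazakAux.Phi n a k, ?_, ?_, ?_, ?_, ?_, ?_, ?_⟩
  · -- additive
    intro M N _ _
    ext t p q
    simp [RazakAux.Phi, Matrix.add_apply]
  · -- smul
    intro z M _
    ext t p q
    simp [RazakAux.Phi, Matrix.smul_apply]
  · -- multiplicative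
    intro M N _ _
    ext t p q
    obtain ⟨⟨up, xp⟩, rfl⟩ := (RazakAux.EE n a k).surjective p
    obtain ⟨⟨uq, xq⟩, rfl⟩ := (RazakAux.EE n a k).surjective q
    simp only [RazakAux.Phi, ContinuousMap.coe_mk, Matrix.of_apply, ContinuousMap.mul_apply,
      Matrix.mul_apply, Equiv.symm_apply_apply, ContinuousMap.sum_apply, Matrix.sum_apply]
    rw [← Equiv.sum_comp (RazakAux.EE n a k)
      (fun r => M up ((RazakAux.EE n a k).symm r).1 t xp ((RazakAux.EE n a k).symm r).2 *
        N ((RazakAux.EE n a k).symm r).1 uq t ((RazakAux.EE n a k).symm r).2 xq)]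
    simp [Fintype.sum_prod_type, Finset.mul_sum]
  · -- star
    intro M _
    ext t p q
    simp [RazakAux.Phi, Matrix.star_apply]
  · -- membership
    intro M hM
    choose c h0 h1 using fun u v => hM u v
    refine ⟨Matrix.of fun i j =>
      c ((RazakAux.ek n k).symm i).1 ((RazakAux.ek n k).symm j).1
        ((RazakAux.ek n k).symm i).2 ((RazakAux.ek n k).symm j).2, ?_, ?_⟩
    · ext p q
      obtain ⟨⟨i, b⟩, rfl⟩ := finProdFinEquiv.surjective p
      obtain ⟨⟨u, s⟩, rfl⟩ := (RazakAux.ek n k).surjective i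
      obtain ⟨⟨j, b'⟩, rfl⟩ := finProdFinEquiv.surjective q
      obtain ⟨⟨u', s'⟩, rfl⟩ := (RazakAux.ek n k).surjective j
      rw [RazakAux.cdiag_apply]
      simp only [RazakAux.Phi, ContinuousMap.coe_mk, Matrix.of_apply, RazakAux.EE_symm_apply]
      rw [h0 u u', RazakAux.cdiag_apply]
      split_ifs <;> simp
    · ext p q
      obtain ⟨⟨i, b⟩, rfl⟩ := finProdFinEquiv.surjective p
      obtain ⟨⟨u, s⟩, rfl⟩ := (RazakAux.ek n k).surjective i
      obtain ⟨⟨j, b'⟩, rfl⟩ := finProdFinEquiv.surjective q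
      obtain ⟨⟨u', s'⟩, rfl⟩ := (RazakAux.ek n k).surjective j
      rw [RazakAux.cdiag_apply]
      simp only [RazakAux.Phi, ContinuousMap.coe_mk, Matrix.of_apply, RazakAux.EE_symm_apply]
      rw [h1 u u', RazakAux.cdiag_apply]
      split_ifs <;> simp
  · -- injective
    intro M N _ _ h
    ext u v t x y
    have h' := congrArg (fun f : C(I01, Mat (k * n * (a + 1))) =>
      f t (RazakAux.EE n a k (u, x)) (RazakAux.EE n a k (v, y))) h
    simpa [RazakAux.Phi] using h'
  · -- surjective
    intro g hg
    obtain ⟨C, hg0, hg1⟩ := hg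
    refine ⟨Matrix.of fun u v =>
      ⟨fun t => Matrix.of fun x y => g t (RazakAux.EE n a k (u, x)) (RazakAux.EE n a k (v, y)),
        continuous_matrix fun x y => (continuous_apply (RazakAux.EE n a k (v, y))).comp <|
          (continuous_apply (RazakAux.EE n a k (u, x))).comp g.continuous⟩, ?_, ?_⟩
    · intro u v
      refine ⟨Matrix.of fun s s' => C (RazakAux.ek n k (u, s)) (RazakAux.ek n k (v, s')), ?_, ?_⟩
      · ext x y
        obtain ⟨⟨s, b⟩, rfl⟩ := finProdFinEquiv.surjective x
        obtain ⟨⟨s', b'⟩, rfl⟩ := finProdFinEquiv.surjective y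
        rw [RazakAux.cdiag_apply]
        simp only [Matrix.of_apply, ContinuousMap.coe_mk]
        rw [RazakAux.EE_apply, RazakAux.EE_apply, hg0, RazakAux.cdiag_apply]
        split_ifs <;> simp
      · ext x y
        obtain ⟨⟨s, b⟩, rfl⟩ := finProdFinEquiv.surjective x
        obtain ⟨⟨s', b'⟩, rfl⟩ := finProdFinEquiv.surjective y
        rw [RazakAux.cdiag_apply]
        simp only [Matrix.of_apply, ContinuousMap.coe_mk]
        rw [RazakAux.EE_apply, RazakAux.EE_apply, hg1, RazakAux.cdiag_apply]
    · ext t p q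
      simp [RazakAux.Phi, Equiv.apply_symm_apply]
end
end

section
/- The Razak building block A(n,n') is stably projectionless: for every positive integer k, every element p of M_k(A(n,n')) satisfying p = p* and p·p = p is zero. -/
open scoped Matrix.Norms.L2Operator ComplexOrder
open Filter MeasureTheory

noncomputable section

/-- The trace of a self-adjoint idempotent complex matrix is a natural number. -/
lemma aux_trace_proj {ι : Type*} [Fintype ι] [DecidableEq ι] (Q : Matrix ι ι ℂ)
    (hH : Q.IsHermitian) (hQ : Q * Q = Q) : ∃ m : ℕ, Q.trace = (m : ℂ) := by
  classical
  set U : Matrix ι ι ℂ := (Matrix.IsHermitian.eigenvectorUnitary hH : Matrix ι ι ℂ) with hU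
  have hUU : U * star U = 1 :=
    (Matrix.mem_unitaryGroup_iff).mp (Matrix.IsHermitian.eigenvectorUnitary hH).2
  set d : ι → ℂ := RCLike.ofReal ∘ hH.eigenvalues with hd
  have hdiag : star U * Q * U = Matrix.diagonal d := by
    have := hH.conjStarAlgAut_star_eigenvectorUnitary
    rw [Unitary.conjStarAlgAut_apply, Unitary.coe_star, star_star] at this
    exact this
  -- the diagonal matrix is idempotent
  have hDD : Matrix.diagonal d * Matrix.diagonal d = Matrix.diagonal d := by
    rw [← hdiag]
    calc star U * Q * U * (star U * Q * U)
        = star U * (Q * (U * star U) * Q) * U := by noncomm_ring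
      _ = star U * Q * U := by rw [hUU, Matrix.mul_one, hQ]
  have hDD' : Matrix.diagonal (fun i => d i * d i) = Matrix.diagonal d := by
    rw [← Matrix.diagonal_mul_diagonal]; exact hDD
  have hdi : ∀ i, d i * d i = d i := by
    intro i
    have h1 : Matrix.diagonal (fun i => d i * d i) i i = Matrix.diagonal d i i := by rw [hDD']
    simpa [Matrix.diagonal_apply_eq] using h1
  have heig : ∀ i, hH.eigenvalues i = 0 ∨ hH.eigenvalues i = 1 := by
    intro i
    have h1 : ((hH.eigenvalues i * hH.eigenvalues i : ℝ) : ℂ) = ((hH.eigenvalues i : ℝ) : ℂ) := by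
      push_cast
      simpa [hd] using hdi i
    have h2 : hH.eigenvalues i * hH.eigenvalues i = hH.eigenvalues i := by
      exact_mod_cast h1
    have h3 : hH.eigenvalues i * (hH.eigenvalues i - 1) = 0 := by ring_nf; linarith
    rcases mul_eq_zero.mp h3 with h | h
    · exact Or.inl h
    · exact Or.inr (by linarith)
  -- trace Q = trace of the diagonal matrix
  have htr : Q.trace = ∑ i, d i := by
    have h2 : (star U * Q * U).trace = Q.trace := by
      rw [Matrix.trace_mul_comm (star U * Q) U, ← Matrix.mul_assoc, hUU, Matrix.one_mul]
    rw [← h2, hdiag, Matrix.trace_diagonal]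
  refine ⟨(Finset.univ.filter fun i => hH.eigenvalues i = 1).card, ?_⟩
  rw [htr, ← Finset.sum_boole]
  refine Finset.sum_congr rfl fun i _ => ?_
  rcases heig i with h | h <;> simp [hd, h]

/-- The trace of `cdiag` is the sum of the traces of the blocks. -/
lemma aux_trace_cdiag {k m N : ℕ} (h : k * m = N) (blocks : Fin m → Mat k) :
    (cdiag h blocks).trace = ∑ b, (blocks b).trace := by
  classical
  unfold cdiag
  rw [Matrix.reindex_apply, ← Matrix.trace_blockDiagonal]
  unfold Matrix.trace
  exact Fintype.sum_equiv ((finProdFinEquiv.trans (finCongr h)).symm) _ _ (fun i => rfl)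

/-- The Razak building block `A(n,n')` is stably projectionless: for every `k > 0`,
every self-adjoint idempotent in `M_k(A(n,n'))` is zero. -/
theorem razak_building_block_stably_projectionless (n a k : ℕ) (hn : 0 < n) (ha : 0 < a)
    (hk : 0 < k) (p : Matrix (Fin k) (Fin k) C(I01, Mat (n * (a + 1))))
    (hp : ∀ i j, p i j ∈ razakA n a rfl)
    (hsa : star p = p) (hidem : p * p = p) : p = 0 := by
  classical
  -- pointwise star and idempotency facts
  have hstar : ∀ i j (t : I01), p j i t = (p i j t).conjTranspose := by
    intro i j t
    have h1 : (star p) j i = p j i := by rw [hsa]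
    rw [← h1]
    rfl
  have hmul : ∀ i j (t : I01), (∑ l, p i l t * p l j t) = p i j t := by
    intro i j t
    have h1 : (p * p) i j = p i j := by rw [hidem]
    calc (∑ l, p i l t * p l j t) = (∑ l, p i l * p l j) t := by
          rw [ContinuousMap.coe_sum]; simp
      _ = p i j t := by rw [← h1, Matrix.mul_apply]
  -- the big flattened matrix at time t
  set Q : I01 → Matrix (Fin k × Fin (n * (a + 1))) (Fin k × Fin (n * (a + 1))) ℂ :=
    fun t => fun ix jy => p ix.1 jy.1 t ix.2 jy.2 with hQdef
  have hQherm : ∀ t, (Q t).IsHermitian := by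
    intro t
    refine Matrix.ext fun ix jy => ?_
    show star (Q t jy ix) = Q t ix jy
    simp only [hQdef]
    rw [hstar ix.1 jy.1 t]
    simp [Matrix.conjTranspose_apply]
  have hQidem : ∀ t, Q t * Q t = Q t := by
    intro t
    refine Matrix.ext fun ix jy => ?_
    obtain ⟨i, x⟩ := ix
    obtain ⟨j, y⟩ := jy
    rw [Matrix.mul_apply, Fintype.sum_prod_type]
    calc ∑ l, ∑ z, Q t (i, x) (l, z) * Q t (l, z) (j, y)
        = ∑ l, (p i l t * p l j t) x y := by
          refine Finset.sum_congr rfl fun l _ => ?_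
          rw [Matrix.mul_apply]
      _ = (∑ l, p i l t * p l j t) x y := by rw [Matrix.sum_apply]
      _ = Q t (i, x) (j, y) := by rw [hmul]
  -- trace of Q t equals sum of traces of diagonal entries
  have hQtrace : ∀ t, (Q t).trace = ∑ i, (p i i t).trace := by
    intro t
    unfold Matrix.trace
    rw [Fintype.sum_prod_type]
    rfl
  -- trace is a natural number for each t
  have hnat : ∀ t, ∃ m : ℕ, (∑ i, (p i i t).trace) = (m : ℂ) := by
    intro t
    obtain ⟨m, hm⟩ := aux_trace_proj (Q t) (hQherm t) (hQidem t)
    exact ⟨m, by rw [← hQtrace t, hm]⟩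
  -- trace equals the (real, nonneg) Frobenius norm squared
  set F : I01 → ℝ := fun t => ∑ q : (Fin k × Fin k) × (Fin (n * (a + 1)) × Fin (n * (a + 1))),
    Complex.normSq (p q.1.1 q.1.2 t q.2.1 q.2.2) with hFdef
  have hFrob : ∀ t, (∑ i, (p i i t).trace) = ((F t : ℝ) : ℂ) := by
    intro t
    have key : (∑ i, (p i i t).trace) = ∑ i, ∑ l, ∑ x, ∑ z,
        (p i l t x z * (starRingEnd ℂ) (p i l t x z)) := by
      calc (∑ i, (p i i t).trace) = ∑ i, (∑ l, p i l t * p l i t).trace := by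
            refine Finset.sum_congr rfl fun i _ => ?_
            rw [hmul i i t]
        _ = ∑ i, ∑ l, (p i l t * p l i t).trace := by
            refine Finset.sum_congr rfl fun i _ => Matrix.trace_sum _ _
        _ = _ := by
            refine Finset.sum_congr rfl fun i _ => Finset.sum_congr rfl fun l _ => ?_
            rw [hstar i l t]
            simp [Matrix.trace, Matrix.diag, Matrix.mul_apply, Matrix.conjTranspose_apply,
              RCLike.star_def]
    rw [key]
    simp only [hFdef]
    push_cast
    simp only [Fintype.sum_prod_type]
    simp [Complex.mul_conj]
  -- the real-valued trace function
  set g : I01 → ℝ := fun t => (∑ i, (p i i t).trace).re with hgdef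
  have hgF : ∀ t, g t = F t := by
    intro t
    simp only [hgdef]
    rw [hFrob t]
    simp
  have hgnat : ∀ t, ∃ m : ℕ, g t = (m : ℝ) := by
    intro t
    obtain ⟨m, hm⟩ := hnat t
    refine ⟨m, ?_⟩
    simp only [hgdef]
    rw [hm]
    simp
  have hgcont : Continuous g := by
    apply Complex.continuous_re.comp
    apply continuous_finset_sum
    intro i _
    show Continuous fun t => ∑ x, p i i t x x
    apply continuous_finset_sum
    intro x _
    exact ((continuous_apply x).comp (continuous_apply x)).comp (p i i).continuous
  -- by IVT and integrality, g is constant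
  have key : ∀ s t : I01, ¬ g s < g t := by
    intro s t hlt
    obtain ⟨ms, hms⟩ := hgnat s
    obtain ⟨mt, hmt⟩ := hgnat t
    have hmlt : ms < mt := by
      have : (ms : ℝ) < mt := by rw [← hms, ← hmt]; exact hlt
      exact_mod_cast this
    have hmem : ((ms : ℝ) + 1/2) ∈ Set.Icc (g s) (g t) := by
      constructor
      · rw [hms]; linarith
      · rw [hmt]
        have : (ms : ℝ) + 1 ≤ mt := by exact_mod_cast hmlt
        linarith
    obtain ⟨u, hu⟩ := intermediate_value_univ s t hgcont hmem
    obtain ⟨mu, hmu⟩ := hgnat u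
    rw [hmu] at hu
    have h2 : (2 * mu : ℝ) = 2 * ms + 1 := by linarith
    have h3 : (2 * mu : ℕ) = 2 * ms + 1 := by exact_mod_cast h2
    omega
  have hconst : ∀ s t : I01, g s = g t := fun s t =>
    le_antisymm (not_lt.mp (key t s)) (not_lt.mp (key s t))
  -- boundary values
  have hbound : ∀ i : Fin k, ∃ c : Mat n,
      (p i i 0).trace = (a : ℂ) * c.trace ∧ (p i i 1).trace = ((a : ℂ) + 1) * c.trace := by
    intro i
    obtain ⟨c, h0, h1⟩ := hp i i
    refine ⟨c, ?_, ?_⟩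
    · rw [h0, aux_trace_cdiag]
      have hite : ∀ b : Fin (a + 1), (if (b : ℕ) < a then c else 0).trace
          = if (b : ℕ) < a then c.trace else 0 := by
        intro b; split <;> simp
      rw [Finset.sum_congr rfl fun b _ => hite b]
      rw [Fin.sum_univ_eq_sum_range (fun j => if j < a then c.trace else 0) (a + 1)]
      have hsub : Finset.range a ⊆ Finset.range (a + 1) := Finset.range_subset_range.mpr (by omega)
      calc ∑ j ∈ Finset.range (a + 1), (if j < a then c.trace else 0)
          = ∑ j ∈ Finset.range (a + 1), (if j ∈ Finset.range a then c.trace else 0) := by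
            refine Finset.sum_congr rfl fun j _ => by simp [Finset.mem_range]
        _ = ∑ j ∈ Finset.range (a + 1) ∩ Finset.range a, c.trace := Finset.sum_ite_mem _ _ _
        _ = (a : ℂ) * c.trace := by
            rw [Finset.inter_eq_right.mpr hsub, Finset.sum_const, Finset.card_range,
              nsmul_eq_mul]
    · rw [h1, aux_trace_cdiag, Finset.sum_const, Finset.card_univ, Fintype.card_fin,
        nsmul_eq_mul]
      push_cast
      ring
  choose c hc0 hc1 using hbound
  set S : ℂ := ∑ i, (c i).trace with hSdef
  have hS0 : (∑ i, (p i i (0 : I01)).trace) = (a : ℂ) * S := by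
    rw [hSdef, Finset.mul_sum]
    exact Finset.sum_congr rfl fun i _ => hc0 i
  have hS1 : (∑ i, (p i i (1 : I01)).trace) = ((a : ℂ) + 1) * S := by
    rw [hSdef, Finset.mul_sum]
    exact Finset.sum_congr rfl fun i _ => hc1 i
  -- the common integer value at 0 and 1 forces S = 0
  obtain ⟨m0, hm0⟩ := hnat 0
  obtain ⟨m1, hm1⟩ := hnat 1
  have hmeq : m0 = m1 := by
    have hr : (m0 : ℝ) = (m1 : ℝ) := by
      have e0 : g 0 = (m0 : ℝ) := by simp only [hgdef]; rw [hm0]; simp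
      have e1 : g 1 = (m1 : ℝ) := by simp only [hgdef]; rw [hm1]; simp
      rw [← e0, ← e1]
      exact hconst 0 1
    exact_mod_cast hr
  have hSzero : S = 0 := by
    have h0' : (a : ℂ) * S = (m0 : ℂ) := by rw [← hS0, hm0]
    have h1' : ((a : ℂ) + 1) * S = (m0 : ℂ) := by rw [← hS1, hm1, hmeq]
    linear_combination h1' - h0'
  -- hence the trace (= Frobenius norm sq) is 0 everywhere
  have hgzero : ∀ t, g t = 0 := by
    intro t
    have h1z : g 1 = 0 := by
      simp only [hgdef]
      rw [hS1, hSzero]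
      simp
    rw [hconst t 1, h1z]
  -- conclude each entry is zero
  ext i j t x y
  have hF0 : F t = 0 := by rw [← hgF t, hgzero t]
  have hterm : Complex.normSq (p i j t x y) = 0 := by
    have hnn : ∀ q ∈ (Finset.univ :
        Finset ((Fin k × Fin k) × (Fin (n * (a + 1)) × Fin (n * (a + 1))))),
        0 ≤ Complex.normSq (p q.1.1 q.1.2 t q.2.1 q.2.2) := fun q _ => Complex.normSq_nonneg _
    exact (Finset.sum_eq_zero_iff_of_nonneg hnn).mp hF0 ((i, j), (x, y)) (Finset.mem_univ _)
  have hz : p i j t x y = 0 := Complex.normSq_eq_zero.mp hterm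
  simpa using hz
end
end

section
/- For every closed two-sided ideal I of the Razak building block A(n,n') there exists a unique closed subset S ⊆ [0,1] satisfying (0 ∈ S if and only if 1 ∈ S) such that I = {f ∈ A(n,n') : f(x) = 0 for all x ∈ S}. -/
open scoped Matrix.Norms.L2Operator ComplexOrder
open Filter MeasureTheory

noncomputable section

lemma cdiag_zero {k m N : ℕ} (h : k * m = N) : cdiag h (fun _ => 0) = 0 := by
  have : (fun _ : Fin m => (0 : Mat k)) = 0 := rfl
  rw [cdiag, this, Matrix.blockDiagonal_zero]
  simp

lemma cdiag_add {k m N : ℕ} (h : k * m = N) (b1 b2 : Fin m → Mat k) :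
    cdiag h (fun i => b1 i + b2 i) = cdiag h b1 + cdiag h b2 := by
  have : (fun i : Fin m => b1 i + b2 i) = b1 + b2 := rfl
  rw [cdiag, this, Matrix.blockDiagonal_add]
  simp [cdiag, Matrix.submatrix_add]

lemma cdiag_smul {k m N : ℕ} (h : k * m = N) (z : ℂ) (b : Fin m → Mat k) :
    cdiag h (fun i => z • b i) = z • cdiag h b := by
  have : (fun i : Fin m => z • b i) = z • b := rfl
  rw [cdiag, this, Matrix.blockDiagonal_smul]
  simp [cdiag, Matrix.submatrix_smul]

lemma cdiag_mul {k m N : ℕ} (h : k * m = N) (b1 b2 : Fin m → Mat k) :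
    cdiag h b1 * cdiag h b2 = cdiag h (fun i => b1 i * b2 i) := by
  simp only [cdiag, Matrix.reindex_apply]
  rw [Matrix.submatrix_mul_equiv _ _ _ ((finProdFinEquiv.trans (finCongr h)).symm) _,
    Matrix.blockDiagonal_mul]

lemma cdiag_apply_block {k m N : ℕ} (h : k * m = N) (b : Fin m → Mat k) (l : Fin m) (p q : Fin k) :
    cdiag h b ((finProdFinEquiv.trans (finCongr h)) (p, l)) ((finProdFinEquiv.trans (finCongr h)) (q, l)) = b l p q := by
  simp [cdiag, Matrix.blockDiagonal_apply_eq]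

lemma cdiag_eq_zero {k m N : ℕ} (h : k * m = N) (b : Fin m → Mat k) (hb : cdiag h b = 0)
    (l : Fin m) : b l = 0 := by
  ext p q
  have := cdiag_apply_block h b l p q
  rw [hb] at this
  simpa using this.symm

lemma sandwich {k : ℕ} (d : Mat k) (p i j q : Fin k) :
    Matrix.single p i 1 * d * Matrix.single j q 1
      = Matrix.single p q (d i j) := by
  ext r s
  by_cases hr : r = p
  · subst hr
    by_cases hs : s = q
    · subst hs
      rw [Matrix.mul_single_apply_same, Matrix.single_mul_apply_same]
      simp [Matrix.single_apply_same]
    · rw [Matrix.mul_single_apply_of_ne 1 j q r s hs]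
      simp [Matrix.single, hs, Ne.symm hs]
  · rw [Matrix.mul_assoc, Matrix.single_mul_apply_of_ne 1 p i r s hr]
    simp [Matrix.single, hr, Ne.symm hr]

lemma matFull {k : ℕ} (d : Mat k) (hd : d ≠ 0) (m : Mat k) :
    ∃ (i j : Fin k) (c : Fin k × Fin k → ℂ),
      m = ∑ pq : Fin k × Fin k, c pq •
        (Matrix.single pq.1 i 1 * d * Matrix.single j pq.2 1) := by
  have : ∃ i j, d i j ≠ 0 := by
    by_contra hc
    push_neg at hc
    exact hd (by ext i j; simpa using hc i j)
  obtain ⟨i, j, hij⟩ := this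
  refine ⟨i, j, fun pq => m pq.1 pq.2 * (d i j)⁻¹, ?_⟩
  have key : ∀ pq : Fin k × Fin k, (m pq.1 pq.2 * (d i j)⁻¹) •
        (Matrix.single pq.1 i 1 * d * Matrix.single j pq.2 1)
      = Matrix.single pq.1 pq.2 (m pq.1 pq.2) := by
    intro pq
    rw [sandwich, Matrix.smul_single]
    congr 1
    rw [smul_eq_mul]
    field_simp
  rw [Finset.sum_congr rfl (fun pq _ => key pq), ← Finset.univ_product_univ,
    Finset.sum_product]
  exact Matrix.matrix_eq_sum_single m

-- L1
lemma razak_zero_iff {n a : ℕ} (ha : 0 < a) {f : C(I01, Mat (n * (a+1)))}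
    (hf : f ∈ razakA n a rfl) : f 0 = 0 ↔ f 1 = 0 := by
  obtain ⟨c, h0, h1⟩ := hf
  constructor
  · intro h
    have hc : c = 0 := by
      have := cdiag_eq_zero rfl _ (h0 ▸ h) ⟨0, Nat.succ_pos a⟩
      simpa [ha] using this
    rw [h1, hc, cdiag_zero]
  · intro h
    have hc : c = 0 := cdiag_eq_zero rfl _ (h1 ▸ h) ⟨0, Nat.succ_pos a⟩
    rw [h0, hc]
    simpa using cdiag_zero (rfl : n * (a+1) = n * (a+1))

-- L2 : canonical sections
def Pmat (n a : ℕ) (α : Mat n) : Mat (n * (a+1)) :=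
  cdiag rfl (fun i : Fin (a+1) => if (i : ℕ) < a then α else 0)
def Qmat (n a : ℕ) (α : Mat n) : Mat (n * (a+1)) :=
  cdiag rfl (fun i : Fin (a+1) => if (i : ℕ) < a then 0 else α)

def sec (n a : ℕ) (α : Mat n) : C(I01, Mat (n * (a+1))) :=
  ⟨fun t => Pmat n a α + ((t : ℝ) : ℂ) • Qmat n a α, by
    exact continuous_const.add
      (((Complex.continuous_ofReal.comp continuous_subtype_val)).smul continuous_const)⟩

lemma sec_apply_zero (n a : ℕ) (α : Mat n) :
    sec n a α 0 = cdiag rfl (fun i : Fin (a+1) => if (i : ℕ) < a then α else 0) := by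
  simp [sec, Pmat]

lemma sec_apply_one (n a : ℕ) (α : Mat n) :
    sec n a α 1 = cdiag rfl (fun _ : Fin (a+1) => α) := by
  simp only [sec, ContinuousMap.coe_mk]
  rw [show ((1 : I01) : ℝ) = 1 from rfl]
  rw [Complex.ofReal_one, one_smul, Pmat, Qmat, ← cdiag_add]
  have : (fun i : Fin (a+1) => (if (i : ℕ) < a then α else 0) + if (i : ℕ) < a then 0 else α)
      = fun _ : Fin (a+1) => α := by
    funext i; split <;> simp
  rw [this]

lemma sec_mem (n a : ℕ) (α : Mat n) : sec n a α ∈ razakA n a rfl :=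
  ⟨α, sec_apply_zero n a α, sec_apply_one n a α⟩

-- scalar multiplication by a real continuous function
def smulC {N : ℕ} (ψ : C(I01, ℝ)) (g : C(I01, Mat N)) : C(I01, Mat N) :=
  ⟨fun t => ((ψ t : ℝ) : ℂ) • g t, by
    exact ((Complex.continuous_ofReal.comp ψ.continuous)).smul g.continuous⟩

lemma smulC_apply {N : ℕ} (ψ : C(I01, ℝ)) (g : C(I01, Mat N)) (t : I01) :
    smulC ψ g t = ((ψ t : ℝ) : ℂ) • g t := rfl

-- identity-scalar section
def idSec (n a : ℕ) (ψ : C(I01, ℝ)) : C(I01, Mat (n * (a+1))) :=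
  ⟨fun t => ((ψ t : ℝ) : ℂ) • (1 : Mat (n * (a+1))), by
    exact ((Complex.continuous_ofReal.comp ψ.continuous)).smul continuous_const⟩

lemma idSec_mem (n a : ℕ) (ψ : C(I01, ℝ)) (h0 : ψ 0 = 0) (h1 : ψ 1 = 0) :
    idSec n a ψ ∈ razakA n a rfl := by
  refine ⟨0, ?_, ?_⟩
  · show ((ψ 0 : ℝ) : ℂ) • (1 : Mat (n * (a+1))) = _
    rw [h0]
    simp only [Complex.ofReal_zero, zero_smul, ite_self]
    exact (cdiag_zero rfl).symm
  · show ((ψ 1 : ℝ) : ℂ) • (1 : Mat (n * (a+1))) = _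
    rw [h1]
    simp only [Complex.ofReal_zero, zero_smul]
    exact (cdiag_zero rfl).symm

-- NEW MATERIAL

lemma cdiag_sum {k m N : ℕ} (h : k * m = N) {ι : Type*} (s : Finset ι)
    (b : ι → Fin m → Mat k) :
    ∑ x ∈ s, cdiag h (b x) = cdiag h (fun l => ∑ x ∈ s, b x l) := by
  classical
  induction s using Finset.cons_induction with
  | empty => simpa using (cdiag_zero h).symm
  | cons x s hx ih =>
      simp only [Finset.sum_cons, ih, ← cdiag_add]

section ideal
variable {n a : ℕ} {Idl : Set C(I01, Mat (n * (a+1)))}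

lemma smulC_mem
    (hadd : ∀ f g, f ∈ Idl → g ∈ Idl → f + g ∈ Idl)
    (hsmul : ∀ (z : ℂ) (f), f ∈ Idl → z • f ∈ Idl)
    (hmul : ∀ f g, f ∈ Idl → g ∈ razakA n a rfl → f * g ∈ Idl ∧ g * f ∈ Idl)
    (ψ : C(I01, ℝ)) (hψ : ψ 0 = ψ 1) {g} (hg : g ∈ Idl) : smulC ψ g ∈ Idl := by
  have hmem := idSec_mem n a (ψ - ContinuousMap.const _ (ψ 0)) (by simp) (by simp [hψ])
  have key : smulC ψ g = g * idSec n a (ψ - ContinuousMap.const I01 (ψ 0)) + (ψ 0 : ℂ) • g := by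
    refine ContinuousMap.ext fun t => ?_
    simp only [smulC, idSec, ContinuousMap.add_apply, ContinuousMap.mul_apply,
      ContinuousMap.smul_apply, ContinuousMap.coe_mk, ContinuousMap.sub_apply,
      ContinuousMap.const_apply]
    rw [mul_smul_comm, mul_one, Complex.ofReal_sub, sub_smul]
    abel
  rw [key]
  exact hadd _ _ (hmul g _ hg hmem).1 (hsmul _ _ hg)

lemma sum_mem_idl
    (hzero : (0 : C(I01, Mat (n * (a + 1)))) ∈ Idl)
    (hadd : ∀ f g, f ∈ Idl → g ∈ Idl → f + g ∈ Idl)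
    {ι : Type*} (s : Finset ι) (F : ι → C(I01, Mat (n * (a+1))))
    (hF : ∀ x ∈ s, F x ∈ Idl) : ∑ x ∈ s, F x ∈ Idl :=
  Finset.sum_induction F (· ∈ Idl) (fun f g hf hg => hadd f g hf hg) hzero hF

lemma interior_full
    (hzero : (0 : C(I01, Mat (n * (a + 1)))) ∈ Idl)
    (hadd : ∀ f g, f ∈ Idl → g ∈ Idl → f + g ∈ Idl)
    (hmul : ∀ f g, f ∈ Idl → g ∈ razakA n a rfl → f * g ∈ Idl ∧ g * f ∈ Idl)
    {x : I01} (hx0 : x ≠ 0) (hx1 : x ≠ 1) {h : C(I01, Mat (n * (a+1)))}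
    (hhI : h ∈ Idl) (hhx : h x ≠ 0) (m : Mat (n * (a+1))) :
    ∃ g ∈ Idl, g x = m := by
  classical
  set Dx : ℝ := min (dist x (0 : I01)) (dist x (1 : I01)) with hDx
  have hDxpos : 0 < Dx := lt_min (dist_pos.2 hx0) (dist_pos.2 hx1)
  set φ : C(I01, ℝ) := ⟨fun y => min (dist y (0 : I01)) (dist y (1 : I01)) / Dx, by
    exact ((continuous_id.dist continuous_const).min
      (continuous_id.dist continuous_const)).div_const _⟩ with hφ
  have hφ0 : φ 0 = 0 := by
    show min (dist (0:I01) (0:I01)) (dist (0:I01) (1:I01)) / Dx = 0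
    rw [dist_self, min_eq_left dist_nonneg, zero_div]
  have hφ1 : φ 1 = 0 := by
    show min (dist (1:I01) (0:I01)) (dist (1:I01) (1:I01)) / Dx = 0
    rw [dist_self, min_eq_right dist_nonneg, zero_div]
  have hφx : φ x = 1 := by
    show Dx / Dx = 1
    field_simp
  set bm : Mat (n * (a+1)) → C(I01, Mat (n * (a+1))) :=
    fun M => smulC φ (ContinuousMap.const I01 M) with hbm
  have bm_mem : ∀ M : Mat (n * (a+1)), bm M ∈ razakA n a rfl := by
    intro M
    refine ⟨0, ?_, ?_⟩
    · show ((φ 0 : ℝ) : ℂ) • M = _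
      rw [hφ0]
      simp only [Complex.ofReal_zero, zero_smul, ite_self]
      exact (cdiag_zero rfl).symm
    · show ((φ 1 : ℝ) : ℂ) • M = _
      rw [hφ1]
      simp only [Complex.ofReal_zero, zero_smul]
      exact (cdiag_zero rfl).symm
  obtain ⟨i, j, c, hc⟩ := matFull (h x) hhx m
  refine ⟨∑ pq : Fin (n * (a+1)) × Fin (n * (a+1)),
    (bm (c pq • Matrix.single pq.1 i 1) * h) *
      bm (Matrix.single j pq.2 1), ?_, ?_⟩
  · exact sum_mem_idl hzero hadd _ _ (fun pq _ =>
      (hmul _ _ (hmul h _ hhI (bm_mem _)).2 (bm_mem _)).1)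
  · rw [ContinuousMap.sum_apply]
    have hterm : ∀ pq : Fin (n * (a+1)) × Fin (n * (a+1)),
        ((bm (c pq • Matrix.single pq.1 i 1) * h) *
          bm (Matrix.single j pq.2 1)) x
        = c pq • (Matrix.single pq.1 i 1 * h x * Matrix.single j pq.2 1) := by
      intro pq
      rw [ContinuousMap.mul_apply, ContinuousMap.mul_apply]
      show (((φ x : ℝ) : ℂ) • (c pq • Matrix.single pq.1 i 1) * h x) *
          (((φ x : ℝ) : ℂ) • Matrix.single j pq.2 1) = _
      rw [hφx]
      simp only [Complex.ofReal_one, one_smul]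
      rw [Matrix.smul_mul, Matrix.smul_mul]
    rw [Finset.sum_congr rfl (fun pq _ => hterm pq)]
    exact hc.symm

lemma endpoint_full (ha : 0 < a)
    (hzero : (0 : C(I01, Mat (n * (a + 1)))) ∈ Idl)
    (hadd : ∀ f g, f ∈ Idl → g ∈ Idl → f + g ∈ Idl)
    (hsub : Idl ⊆ razakA n a rfl)
    (hmul : ∀ f g, f ∈ Idl → g ∈ razakA n a rfl → f * g ∈ Idl ∧ g * f ∈ Idl)
    {h f : C(I01, Mat (n * (a+1)))} (hhI : h ∈ Idl) (hh0 : h 0 ≠ 0)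
    (hf : f ∈ razakA n a rfl) :
    ∃ g ∈ Idl, g 0 = f 0 ∧ g 1 = f 1 := by
  classical
  obtain ⟨c, hf0, hf1⟩ := hf
  obtain ⟨d, hh0', hh1'⟩ := hsub hhI
  have hd : d ≠ 0 := by
    intro hd0
    apply hh0
    rw [hh0', hd0]
    simpa using cdiag_zero (rfl : n * (a+1) = n * (a+1))
  obtain ⟨i, j, κ, hc⟩ := matFull d hd c
  refine ⟨∑ pq : Fin n × Fin n,
    (sec n a (κ pq • Matrix.single pq.1 i 1) * h) *
      sec n a (Matrix.single j pq.2 1), ?_, ?_, ?_⟩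
  · exact sum_mem_idl hzero hadd _ _ (fun pq _ =>
      (hmul _ _ (hmul h _ hhI (sec_mem n a _)).2 (sec_mem n a _)).1)
  · rw [ContinuousMap.sum_apply]
    have hterm : ∀ pq : Fin n × Fin n,
        ((sec n a (κ pq • Matrix.single pq.1 i 1) * h) *
          sec n a (Matrix.single j pq.2 1)) 0
        = cdiag rfl (fun l : Fin (a+1) => if (l : ℕ) < a then
            κ pq • (Matrix.single pq.1 i 1 * d * Matrix.single j pq.2 1)
          else 0) := by
      intro pq
      rw [ContinuousMap.mul_apply, ContinuousMap.mul_apply, sec_apply_zero, sec_apply_zero,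
        hh0', cdiag_mul, cdiag_mul]
      have hfun : (fun l : Fin (a+1) =>
          ((if (l : ℕ) < a then κ pq • Matrix.single pq.1 i 1 else 0) *
            (if (l : ℕ) < a then d else 0)) *
            (if (l : ℕ) < a then Matrix.single j pq.2 1 else 0))
          = (fun l : Fin (a+1) => if (l : ℕ) < a then
              κ pq • (Matrix.single pq.1 i 1 * d * Matrix.single j pq.2 1)
            else 0) := by
        funext l
        by_cases hl : (l : ℕ) < a <;>
          simp [hl, ← Matrix.smul_mul, Matrix.smul_single, smul_eq_mul]
      rw [hfun]
    rw [Finset.sum_congr rfl (fun pq _ => hterm pq), cdiag_sum, hf0]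
    have hfun : (fun l : Fin (a+1) => ∑ pq : Fin n × Fin n, if (l : ℕ) < a then
          κ pq • (Matrix.single pq.1 i 1 * d * Matrix.single j pq.2 1)
        else 0)
        = (fun l : Fin (a+1) => if (l : ℕ) < a then c else 0) := by
      funext l
      by_cases hl : (l : ℕ) < a
      · simp only [if_pos hl]
        exact hc.symm
      · simp [hl]
    rw [hfun]
  · rw [ContinuousMap.sum_apply]
    have hterm : ∀ pq : Fin n × Fin n,
        ((sec n a (κ pq • Matrix.single pq.1 i 1) * h) *
          sec n a (Matrix.single j pq.2 1)) 1
        = cdiag rfl (fun _ : Fin (a+1) =>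
            κ pq • (Matrix.single pq.1 i 1 * d * Matrix.single j pq.2 1)) := by
      intro pq
      rw [ContinuousMap.mul_apply, ContinuousMap.mul_apply, sec_apply_one, sec_apply_one,
        hh1', cdiag_mul, cdiag_mul]
      have hfun : (fun l : Fin (a+1) =>
          ((κ pq • Matrix.single pq.1 i 1) * d) * Matrix.single j pq.2 1)
          = (fun _ : Fin (a+1) =>
            κ pq • (Matrix.single pq.1 i 1 * d * Matrix.single j pq.2 1)) := by
        funext l
        simp [← Matrix.smul_mul, Matrix.smul_single, smul_eq_mul]
      rw [hfun]
    rw [Finset.sum_congr rfl (fun pq _ => hterm pq), cdiag_sum, hf1]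
    have hfun : (fun l : Fin (a+1) => ∑ pq : Fin n × Fin n,
          κ pq • (Matrix.single pq.1 i 1 * d * Matrix.single j pq.2 1))
        = (fun _ : Fin (a+1) => c) := by
      funext l
      exact hc.symm
    rw [hfun]

end ideal

section ideal2
variable {n a : ℕ} {Idl : Set C(I01, Mat (n * (a+1)))}

lemma real_smul_mat {N : ℕ} (r : ℝ) (M : Mat N) : ((r : ℝ) : ℂ) • M = r • M := by
  ext i j
  simp [Complex.real_smul]

lemma razak_approx (ha : 0 < a)
    (hsub : Idl ⊆ razakA n a rfl)
    (hzero : (0 : C(I01, Mat (n * (a + 1)))) ∈ Idl)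
    (hadd : ∀ f g, f ∈ Idl → g ∈ Idl → f + g ∈ Idl)
    (hsmul : ∀ (z : ℂ) (f), f ∈ Idl → z • f ∈ Idl)
    (hmul : ∀ f g, f ∈ Idl → g ∈ razakA n a rfl → f * g ∈ Idl ∧ g * f ∈ Idl)
    {f : C(I01, Mat (n * (a+1)))} (hfA : f ∈ razakA n a rfl)
    (hfS : ∀ x : I01, (∀ g ∈ Idl, g x = 0) → f x = 0)
    {ε : ℝ} (hε : 0 < ε) :
    ∃ g ∈ Idl, ∀ y, ‖f y - g y‖ ≤ ε := by
  classical
  -- Step 1: endpoint approximant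
  obtain ⟨g₀, hg₀I, hg₀0, hg₀1⟩ : ∃ g₀ ∈ Idl, g₀ 0 = f 0 ∧ g₀ 1 = f 1 := by
    by_cases hf0 : f 0 = 0
    · exact ⟨0, hzero, by simp [hf0], by
        simp [(razak_zero_iff ha hfA).1 hf0]⟩
    · have hex : ∃ h ∈ Idl, h 0 ≠ (0 : Mat (n * (a+1))) := by
        by_contra hcon
        push_neg at hcon
        exact hf0 (hfS 0 hcon)
      obtain ⟨h, hhI, hh0⟩ := hex
      exact endpoint_full ha hzero hadd hsub hmul hhI hh0 hfA
  -- Step 2: δ around the endpoints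
  set V₀ : Set I01 := {y | ‖f y - g₀ y‖ < ε} with hV₀
  have hV₀open : IsOpen V₀ :=
    isOpen_lt (f.continuous.sub g₀.continuous).norm continuous_const
  have h0V₀ : (0 : I01) ∈ V₀ := by simp [hV₀, hg₀0, hε]
  have h1V₀ : (1 : I01) ∈ V₀ := by simp [hV₀, hg₀1, hε]
  obtain ⟨δ, hδpos, hδ⟩ :
      ∃ δ > 0, ∀ y : I01, min (dist y (0:I01)) (dist y (1:I01)) ≤ δ → y ∈ V₀ := by
    by_cases hVc : V₀ᶜ.Nonempty
    · have h0pos : 0 < Metric.infDist (0:I01) V₀ᶜ :=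
        (hV₀open.isClosed_compl.notMem_iff_infDist_pos hVc).1 (by simpa using h0V₀)
      have h1pos : 0 < Metric.infDist (1:I01) V₀ᶜ :=
        (hV₀open.isClosed_compl.notMem_iff_infDist_pos hVc).1 (by simpa using h1V₀)
      refine ⟨min (Metric.infDist (0:I01) V₀ᶜ) (Metric.infDist (1:I01) V₀ᶜ) / 2,
        by positivity, ?_⟩
      intro y hy
      by_contra hyV
      have h1 : Metric.infDist (0:I01) V₀ᶜ ≤ dist y 0 := by
        rw [dist_comm]; exact Metric.infDist_le_dist_of_mem hyV
      have h2 : Metric.infDist (1:I01) V₀ᶜ ≤ dist y 1 := by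
        rw [dist_comm]; exact Metric.infDist_le_dist_of_mem hyV
      have h3 : min (Metric.infDist (0:I01) V₀ᶜ) (Metric.infDist (1:I01) V₀ᶜ)
          ≤ min (dist y (0:I01)) (dist y (1:I01)) :=
        le_min (le_trans (min_le_left _ _) h1) (le_trans (min_le_right _ _) h2)
      have h4 : 0 < min (Metric.infDist (0:I01) V₀ᶜ) (Metric.infDist (1:I01) V₀ᶜ) :=
        lt_min h0pos h1pos
      linarith
    · refine ⟨1, one_pos, fun y _ => ?_⟩
      by_contra hy
      exact hVc ⟨y, hy⟩
  -- Step 3: the endpoint cutoff φ₀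
  set D : C(I01, ℝ) := ⟨fun y => min (dist y (0:I01)) (dist y (1:I01)),
    (continuous_id.dist continuous_const).min (continuous_id.dist continuous_const)⟩ with hD
  have hD0 : D 0 = 0 := by
    show min (dist (0:I01) (0:I01)) (dist (0:I01) (1:I01)) = 0
    rw [dist_self, min_eq_left dist_nonneg]
  have hD1 : D 1 = 0 := by
    show min (dist (1:I01) (0:I01)) (dist (1:I01) (1:I01)) = 0
    rw [dist_self, min_eq_right dist_nonneg]
  have hDnonneg : ∀ y, 0 ≤ D y := fun y => le_min dist_nonneg dist_nonneg
  set φ₀ : C(I01, ℝ) := ⟨fun y => min 1 (max 0 (2 - 2 * (D y / δ))), by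
    exact continuous_const.min (continuous_const.max
      (continuous_const.sub (continuous_const.mul (D.continuous.div_const δ))))⟩ with hφ₀
  have hφ₀nonneg : ∀ y, 0 ≤ φ₀ y := fun y => le_min zero_le_one (le_max_left _ _)
  have hφ₀le1 : ∀ y, φ₀ y ≤ 1 := fun y => min_le_left _ _
  have hφ₀0 : φ₀ 0 = 1 := by
    show min 1 (max 0 (2 - 2 * (D 0 / δ))) = 1
    rw [hD0]
    norm_num
  have hφ₀1 : φ₀ 1 = 1 := by
    show min 1 (max 0 (2 - 2 * (D 1 / δ))) = 1
    rw [hD1]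
    norm_num
  have hφ₀pos : ∀ y, 0 < φ₀ y → y ∈ V₀ := by
    intro y hy
    have h1 : 0 < max 0 (2 - 2 * (D y / δ)) := lt_of_lt_of_le hy (min_le_right _ _)
    have h2 : 0 < 2 - 2 * (D y / δ) := by
      rcases (max_choice 0 (2 - 2 * (D y / δ))) with h | h
      · rw [h] at h1; exact absurd h1 (lt_irrefl 0)
      · rwa [h] at h1
    have h3 : D y / δ < 1 := by linarith
    have h4 : D y < δ := (div_lt_one hδpos).1 h3
    exact hδ y h4.le
  have hφ₀eq1 : ∀ y, D y ≤ δ/2 → φ₀ y = 1 := by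
    intro y hy
    have h1 : D y / δ ≤ 1/2 := by
      rw [div_le_div_iff₀ hδpos two_pos]
      linarith
    have h2 : (1:ℝ) ≤ 2 - 2 * (D y / δ) := by linarith
    have h3 : (1:ℝ) ≤ max 0 (2 - 2 * (D y / δ)) := le_trans h2 (le_max_right _ _)
    show min 1 (max 0 (2 - 2 * (D y / δ))) = 1
    exact min_eq_left h3
  -- Step 4: the compact core and local approximants
  set K₁ : Set I01 := {y | ε ≤ ‖f y‖ ∧ δ/2 ≤ D y} with hK₁
  have hK₁closed : IsClosed K₁ := by
    have e : K₁ = {y | ε ≤ ‖f y‖} ∩ {y | δ/2 ≤ D y} := rfl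
    rw [e]
    exact (isClosed_le continuous_const f.continuous.norm).inter
      (isClosed_le continuous_const D.continuous)
  have hG : ∀ x : I01, ∃ g : C(I01, Mat (n * (a+1))), g ∈ Idl ∧ (x ∈ K₁ → g x = f x) := by
    intro x
    by_cases hx : x ∈ K₁
    · have hfx : f x ≠ 0 := by
        intro h0
        have := hx.1
        rw [h0, norm_zero] at this
        linarith
      have hx0 : x ≠ 0 := by
        intro h
        subst h
        have := hx.2
        rw [hD0] at this
        linarith
      have hx1 : x ≠ 1 := by
        intro h
        subst h
        have := hx.2
        rw [hD1] at this
        linarith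
      have hex : ∃ h ∈ Idl, h x ≠ (0 : Mat (n * (a+1))) := by
        by_contra hcon
        push_neg at hcon
        exact hfx (hfS x hcon)
      obtain ⟨h, hhI, hhx⟩ := hex
      obtain ⟨g, hgI, hgx⟩ := interior_full hzero hadd hmul hx0 hx1 hhI hhx (f x)
      exact ⟨g, hgI, fun _ => hgx⟩
    · exact ⟨0, hzero, fun h => absurd h hx⟩
  choose G hGI hGx using hG
  set V : I01 → Set I01 := fun x => {y | ‖f y - G x y‖ < ε ∧ y ≠ 0 ∧ y ≠ 1} with hV
  have hVopen : ∀ x, IsOpen (V x) := by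
    intro x
    have e : V x = {y | ‖f y - G x y‖ < ε} ∩ ({(0:I01)}ᶜ ∩ {(1:I01)}ᶜ) := by
      ext y
      simp [hV, Set.mem_compl_iff, and_assoc]
    rw [e]
    exact (isOpen_lt (f.continuous.sub (G x).continuous).norm continuous_const).inter
      (isOpen_compl_singleton.inter isOpen_compl_singleton)
  have h0V : ∀ x, (0:I01) ∉ V x := fun x h => h.2.1 rfl
  have h1V : ∀ x, (1:I01) ∉ V x := fun x h => h.2.2 rfl
  have hVcover : K₁ ⊆ ⋃ x, V x := by
    intro y hy
    refine Set.mem_iUnion.2 ⟨y, ?_, ?_, ?_⟩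
    · rw [hGx y hy, sub_self, norm_zero]; exact hε
    · intro h
      subst h
      have := hy.2
      rw [hD0] at this
      linarith
    · intro h
      subst h
      have := hy.2
      rw [hD1] at this
      linarith
  obtain ⟨T, hT⟩ := (hK₁closed.isCompact).elim_finite_subcover V hVopen hVcover
  -- Step 5: partition functions
  set ψf : I01 → I01 → ℝ := fun x y => Metric.infDist y (V x)ᶜ with hψf
  have hψcont : ∀ x, Continuous (ψf x) := fun x => Metric.continuous_infDist_pt _
  have hψnonneg : ∀ x y, 0 ≤ ψf x y := fun x y => Metric.infDist_nonneg
  have hψpos : ∀ x y, y ∈ V x → 0 < ψf x y := by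
    intro x y hy
    exact ((hVopen x).isClosed_compl.notMem_iff_infDist_pos ⟨0, h0V x⟩).1 (by simpa using hy)
  have hψzero : ∀ x y, y ∉ V x → ψf x y = 0 := fun x y hy =>
    Metric.infDist_zero_of_mem (by simpa using hy)
  set den : I01 → ℝ :=
    fun y => (∑ x ∈ T, ψf x y) + max 0 (ε - ‖f y‖) + max 0 (δ/2 - D y) with hden
  have hsum_nonneg : ∀ y, 0 ≤ ∑ x ∈ T, ψf x y :=
    fun y => Finset.sum_nonneg fun x _ => hψnonneg x y
  have hdenpos : ∀ y, 0 < den y := by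
    intro y
    by_cases hy : y ∈ K₁
    · have h1 : ∃ x ∈ T, y ∈ V x := by
        have := hT hy
        simpa using this
      obtain ⟨x, hxT, hyVx⟩ := h1
      have h2 : 0 < ∑ x ∈ T, ψf x y :=
        Finset.sum_pos' (fun x _ => hψnonneg x y) ⟨x, hxT, hψpos x y hyVx⟩
      have h3 : 0 ≤ max 0 (ε - ‖f y‖) := le_max_left _ _
      have h4 : 0 ≤ max 0 (δ/2 - D y) := le_max_left _ _
      simp only [hden]
      linarith
    · have h1 : ¬(ε ≤ ‖f y‖) ∨ ¬(δ/2 ≤ D y) := by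
        by_contra hcon
        push_neg at hcon
        exact hy ⟨hcon.1, hcon.2⟩
      have h2 : 0 < max 0 (ε - ‖f y‖) + max 0 (δ/2 - D y) := by
        rcases h1 with h | h
        · have : 0 < ε - ‖f y‖ := by linarith [not_le.1 h]
          have h5 : 0 < max 0 (ε - ‖f y‖) := lt_max_of_lt_right this
          linarith [le_max_left (0:ℝ) (δ/2 - D y)]
        · have : 0 < δ/2 - D y := by linarith [not_le.1 h]
          have h5 : 0 < max 0 (δ/2 - D y) := lt_max_of_lt_right this
          linarith [le_max_left (0:ℝ) (ε - ‖f y‖)]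
      simp only [hden]
      linarith [hsum_nonneg y]
  have hdencont : Continuous den := by
    refine ((continuous_finset_sum T fun x _ => hψcont x).add ?_).add ?_
    · exact continuous_const.max (continuous_const.sub f.continuous.norm)
    · exact continuous_const.max (continuous_const.sub D.continuous)
  set ρ : I01 → C(I01, ℝ) := fun x =>
    ⟨fun y => ψf x y / den y, (hψcont x).div hdencont (fun y => (hdenpos y).ne')⟩ with hρ
  have hρnonneg : ∀ x y, 0 ≤ ρ x y := fun x y => div_nonneg (hψnonneg x y) (hdenpos y).le
  have hρ0 : ∀ x, ρ x 0 = 0 := by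
    intro x
    show ψf x 0 / den 0 = 0
    rw [hψzero x 0 (h0V x), zero_div]
  have hρ1 : ∀ x, ρ x 1 = 0 := by
    intro x
    show ψf x 1 / den 1 = 0
    rw [hψzero x 1 (h1V x), zero_div]
  have hρposV : ∀ x y, 0 < ρ x y → y ∈ V x := by
    intro x y hy
    by_contra hc
    rw [show ρ x y = ψf x y / den y from rfl, hψzero x y hc, zero_div] at hy
    exact lt_irrefl 0 hy
  have hρsum_le : ∀ y, ∑ x ∈ T, ρ x y ≤ 1 := by
    intro y
    have e : ∑ x ∈ T, ρ x y = (∑ x ∈ T, ψf x y) / den y := by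
      rw [Finset.sum_div]
      rfl
    rw [e, div_le_one (hdenpos y)]
    have h3 : 0 ≤ max 0 (ε - ‖f y‖) := le_max_left _ _
    have h4 : 0 ≤ max 0 (δ/2 - D y) := le_max_left _ _
    simp only [hden]
    linarith
  have hρsum_eq : ∀ y, y ∈ K₁ → ∑ x ∈ T, ρ x y = 1 := by
    intro y hy
    have e : ∑ x ∈ T, ρ x y = (∑ x ∈ T, ψf x y) / den y := by
      rw [Finset.sum_div]
      rfl
    have h1 : max 0 (ε - ‖f y‖) = 0 := max_eq_left (by linarith [hy.1])
    have h2 : max 0 (δ/2 - D y) = 0 := max_eq_left (by linarith [hy.2])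
    have h3 : den y = ∑ x ∈ T, ψf x y := by
      simp only [hden, h1, h2, add_zero]
    rw [e, h3, div_self]
    rw [← h3]
    exact (hdenpos y).ne'
  -- Step 6: the approximant
  set g : C(I01, Mat (n * (a+1))) :=
    smulC φ₀ g₀ + ∑ x ∈ T, smulC ((1 - φ₀) * ρ x) (G x) with hg
  have hgI : g ∈ Idl := by
    refine hadd _ _ (smulC_mem hadd hsmul hmul φ₀ (by rw [hφ₀0, hφ₀1]) hg₀I) ?_
    refine sum_mem_idl hzero hadd _ _ fun x _ => ?_
    refine smulC_mem hadd hsmul hmul _ ?_ (hGI x)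
    show (1 - φ₀) 0 * ρ x 0 = (1 - φ₀) 1 * ρ x 1
    rw [hρ0, hρ1, mul_zero, mul_zero]
  refine ⟨g, hgI, ?_⟩
  -- Step 7: the estimate
  intro y
  have hgy : g y = (φ₀ y) • g₀ y + ∑ x ∈ T, ((1 - φ₀ y) * ρ x y) • G x y := by
    simp only [hg, ContinuousMap.add_apply, ContinuousMap.sum_apply]
    rw [show (smulC φ₀ g₀) y = ((φ₀ y : ℝ) : ℂ) • g₀ y from rfl, real_smul_mat]
    congr 1
  set s : ℝ := ∑ x ∈ T, (1 - φ₀ y) * ρ x y with hs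
  have hsnonneg : 0 ≤ s :=
    Finset.sum_nonneg fun x _ => mul_nonneg (by linarith [hφ₀le1 y]) (hρnonneg x y)
  have hs_eq : s = (1 - φ₀ y) * ∑ x ∈ T, ρ x y := by
    rw [hs, Finset.mul_sum]
  have hsle : s ≤ 1 - φ₀ y := by
    rw [hs_eq]
    calc (1 - φ₀ y) * ∑ x ∈ T, ρ x y ≤ (1 - φ₀ y) * 1 :=
      mul_le_mul_of_nonneg_left (hρsum_le y) (by linarith [hφ₀le1 y])
    _ = 1 - φ₀ y := mul_one _
  have key : f y - g y = (1 - φ₀ y - s) • f y + (φ₀ y) • (f y - g₀ y)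
      + ∑ x ∈ T, ((1 - φ₀ y) * ρ x y) • (f y - G x y) := by
    rw [hgy, hs]
    simp only [smul_sub, sub_smul, one_smul, Finset.sum_sub_distrib, Finset.sum_smul]
    abel
  have hb1 : ‖(1 - φ₀ y - s) • f y‖ ≤ (1 - φ₀ y - s) * ε := by
    have hr : 0 ≤ 1 - φ₀ y - s := by linarith
    rcases eq_or_lt_of_le hr with hr0 | hrpos
    · rw [← hr0, zero_smul, norm_zero, zero_mul]
    · have hfac : 1 - φ₀ y - s = (1 - φ₀ y) * (1 - ∑ x ∈ T, ρ x y) := by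
        rw [hs_eq]; ring
      have h1φ : 0 < 1 - φ₀ y := by
        by_contra hc
        push_neg at hc
        have : 1 - φ₀ y = 0 := le_antisymm hc (by linarith [hφ₀le1 y])
        rw [hfac, this, zero_mul] at hrpos
        exact lt_irrefl 0 hrpos
      have hρlt : ∑ x ∈ T, ρ x y < 1 := by
        by_contra hc
        push_neg at hc
        have : ∑ x ∈ T, ρ x y = 1 := le_antisymm (hρsum_le y) hc
        rw [hfac, this, sub_self, mul_zero] at hrpos
        exact lt_irrefl 0 hrpos
      have hyK : y ∉ K₁ := fun hy => by
        rw [hρsum_eq y hy] at hρlt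
        exact lt_irrefl 1 hρlt
      have hφlt : φ₀ y < 1 := by linarith
      have hDy : δ/2 < D y := by
        by_contra hc
        push_neg at hc
        rw [hφ₀eq1 y hc] at hφlt
        exact lt_irrefl 1 hφlt
      have hfy : ‖f y‖ < ε := by
        by_contra hc
        push_neg at hc
        exact hyK ⟨hc, hDy.le⟩
      rw [norm_smul, Real.norm_of_nonneg hr]
      exact mul_le_mul_of_nonneg_left hfy.le hr
  have hb2 : ‖(φ₀ y) • (f y - g₀ y)‖ ≤ (φ₀ y) * ε := by
    rcases eq_or_lt_of_le (hφ₀nonneg y) with h0 | hpos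
    · rw [← h0, zero_smul, norm_zero, zero_mul]
    · have hyV : y ∈ V₀ := hφ₀pos y hpos
      rw [norm_smul, Real.norm_of_nonneg (hφ₀nonneg y)]
      exact mul_le_mul_of_nonneg_left (le_of_lt hyV) (hφ₀nonneg y)
  have hb3 : ∀ x ∈ T, ‖((1 - φ₀ y) * ρ x y) • (f y - G x y)‖ ≤ ((1 - φ₀ y) * ρ x y) * ε := by
    intro x _
    have hcn : 0 ≤ (1 - φ₀ y) * ρ x y := mul_nonneg (by linarith [hφ₀le1 y]) (hρnonneg x y)
    rcases eq_or_lt_of_le hcn with h0 | hpos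
    · rw [← h0, zero_smul, norm_zero, zero_mul]
    · have hρpos2 : 0 < ρ x y := by
        rcases (lt_or_ge 0 (ρ x y)) with h | h
        · exact h
        · have : ρ x y = 0 := le_antisymm h (hρnonneg x y)
          rw [this, mul_zero] at hpos
          exact absurd hpos (lt_irrefl 0)
      have hyV : y ∈ V x := hρposV x y hρpos2
      rw [norm_smul, Real.norm_of_nonneg hcn]
      exact mul_le_mul_of_nonneg_left (le_of_lt hyV.1) hcn
  calc ‖f y - g y‖
      = ‖(1 - φ₀ y - s) • f y + (φ₀ y) • (f y - g₀ y)
        + ∑ x ∈ T, ((1 - φ₀ y) * ρ x y) • (f y - G x y)‖ := by rw [key]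
    _ ≤ ‖(1 - φ₀ y - s) • f y‖ + ‖(φ₀ y) • (f y - g₀ y)‖
        + ‖∑ x ∈ T, ((1 - φ₀ y) * ρ x y) • (f y - G x y)‖ := norm_add₃_le
    _ ≤ (1 - φ₀ y - s) * ε + (φ₀ y) * ε + ∑ x ∈ T, ((1 - φ₀ y) * ρ x y) * ε := by
        refine add_le_add (add_le_add hb1 hb2) ?_
        exact le_trans (norm_sum_le _ _) (Finset.sum_le_sum hb3)
    _ = (1 - φ₀ y - s) * ε + (φ₀ y) * ε + s * ε := by rw [hs, Finset.sum_mul]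
    _ = ε := by ring

end ideal2

section bump
variable {n a : ℕ}

lemma one_mat_ne_zero {N : ℕ} (hN : 0 < N) : (1 : Mat N) ≠ 0 := by
  intro h
  have := congrFun (congrFun h ⟨0, hN⟩) ⟨0, hN⟩
  rw [Matrix.one_apply_eq] at this
  simp at this

lemma smul_one_ne_zero {N : ℕ} (hN : 0 < N) {r : ℝ} (hr : r ≠ 0) :
    ((r : ℝ) : ℂ) • (1 : Mat N) ≠ 0 := by
  intro h
  have := congrFun (congrFun h ⟨0, hN⟩) ⟨0, hN⟩
  simp only [Matrix.smul_apply, Matrix.one_apply_eq, Matrix.zero_apply, smul_eq_mul,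
    mul_one] at this
  exact hr (by exact_mod_cast this)

lemma sec_one_zero_ne (hn : 0 < n) (ha : 0 < a) :
    sec n a (1 : Mat n) 0 ≠ 0 := by
  rw [sec_apply_zero]
  intro h
  have := cdiag_eq_zero rfl _ h ⟨0, Nat.succ_pos a⟩
  rw [if_pos (by simpa using ha)] at this
  exact one_mat_ne_zero hn this

lemma sec_one_one_ne (hn : 0 < n) :
    sec n a (1 : Mat n) 1 ≠ 0 := by
  rw [sec_apply_one]
  intro h
  have := cdiag_eq_zero rfl _ h ⟨0, Nat.succ_pos a⟩
  exact one_mat_ne_zero hn this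

lemma bump (hn : 0 < n) (ha : 0 < a) {T : Set I01} (hT : IsClosed T)
    (hTiff : ((0:I01) ∈ T ↔ (1:I01) ∈ T)) {x : I01} (hx : x ∉ T) :
    ∃ f ∈ razakA n a rfl, (∀ y ∈ T, f y = 0) ∧ f x ≠ 0 := by
  classical
  by_cases hxe : x = 0 ∨ x = 1
  · -- endpoint case
    have h01 : (0:I01) ∉ T ∧ (1:I01) ∉ T := by
      rcases hxe with h | h
      · subst h
        exact ⟨hx, fun h1 => hx (hTiff.2 h1)⟩
      · subst h
        exact ⟨fun h0 => hx (hTiff.1 h0), hx⟩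
    by_cases hTne : T.Nonempty
    · set m : ℝ := min (Metric.infDist (0:I01) T) (Metric.infDist (1:I01) T) with hm
      have hmpos : 0 < m := lt_min
        ((hT.notMem_iff_infDist_pos hTne).1 h01.1)
        ((hT.notMem_iff_infDist_pos hTne).1 h01.2)
      set ψ : C(I01, ℝ) := ⟨fun y => min (Metric.infDist y T) m / m,
        ((Metric.continuous_infDist_pt T).min continuous_const).div_const m⟩ with hψ
      have hψ0 : ψ 0 = 1 := by
        show min (Metric.infDist (0:I01) T) m / m = 1
        rw [min_eq_right (min_le_left _ _), div_self hmpos.ne']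
      have hψ1 : ψ 1 = 1 := by
        show min (Metric.infDist (1:I01) T) m / m = 1
        rw [min_eq_right (min_le_right _ _), div_self hmpos.ne']
      have hψT : ∀ y ∈ T, ψ y = 0 := by
        intro y hy
        show min (Metric.infDist y T) m / m = 0
        rw [Metric.infDist_zero_of_mem hy, min_eq_left hmpos.le, zero_div]
      refine ⟨smulC ψ (sec n a (1 : Mat n)), ⟨(1 : Mat n), ?_, ?_⟩, ?_, ?_⟩
      · show ((ψ 0 : ℝ) : ℂ) • (sec n a (1 : Mat n) 0) = _
        rw [hψ0, sec_apply_zero]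
        simp
      · show ((ψ 1 : ℝ) : ℂ) • (sec n a (1 : Mat n) 1) = _
        rw [hψ1, sec_apply_one]
        simp
      · intro y hy
        show ((ψ y : ℝ) : ℂ) • (sec n a (1 : Mat n) y) = 0
        rw [hψT y hy]
        simp
      · rcases hxe with h | h
        · subst h
          show ((ψ 0 : ℝ) : ℂ) • (sec n a (1 : Mat n) 0) ≠ 0
          rw [hψ0]
          simpa using sec_one_zero_ne hn ha
        · subst h
          show ((ψ 1 : ℝ) : ℂ) • (sec n a (1 : Mat n) 1) ≠ 0
          rw [hψ1]
          simpa using sec_one_one_ne hn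
    · have hTempty : T = ∅ := Set.not_nonempty_iff_eq_empty.1 hTne
      refine ⟨sec n a (1 : Mat n), sec_mem n a _, ?_, ?_⟩
      · intro y hy
        rw [hTempty] at hy
        exact absurd hy (Set.notMem_empty y)
      · rcases hxe with h | h
        · subst h; exact sec_one_zero_ne hn ha
        · subst h; exact sec_one_one_ne hn
  · -- interior case
    push_neg at hxe
    set C : Set I01 := T ∪ ({0} ∪ {1}) with hC
    have hCclosed : IsClosed C := hT.union (isClosed_singleton.union isClosed_singleton)
    have hCne : C.Nonempty := ⟨0, Or.inr (Or.inl rfl)⟩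
    have hxC : x ∉ C := by
      intro h
      rcases h with h | h | h
      · exact hx h
      · exact hxe.1 h
      · exact hxe.2 h
    have hxpos : 0 < Metric.infDist x C := (hCclosed.notMem_iff_infDist_pos hCne).1 hxC
    set ψ : C(I01, ℝ) := ⟨fun y => Metric.infDist y C, Metric.continuous_infDist_pt C⟩ with hψ
    have hN : 0 < n * (a + 1) := Nat.mul_pos hn (Nat.succ_pos a)
    refine ⟨smulC ψ (ContinuousMap.const I01 (1 : Mat (n * (a+1)))), ⟨0, ?_, ?_⟩, ?_, ?_⟩
    · show ((ψ 0 : ℝ) : ℂ) • (1 : Mat (n * (a+1))) = _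
      have : ψ 0 = 0 := Metric.infDist_zero_of_mem (Or.inr (Or.inl rfl))
      rw [this]
      simp only [Complex.ofReal_zero, zero_smul, ite_self]
      exact (cdiag_zero rfl).symm
    · show ((ψ 1 : ℝ) : ℂ) • (1 : Mat (n * (a+1))) = _
      have : ψ 1 = 0 := Metric.infDist_zero_of_mem (Or.inr (Or.inr rfl))
      rw [this]
      simp only [Complex.ofReal_zero, zero_smul]
      exact (cdiag_zero rfl).symm
    · intro y hy
      show ((ψ y : ℝ) : ℂ) • (1 : Mat (n * (a+1))) = 0
      have : ψ y = 0 := Metric.infDist_zero_of_mem (Or.inl hy)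
      rw [this]
      simp
    · show ((ψ x : ℝ) : ℂ) • (1 : Mat (n * (a+1))) ≠ 0
      exact smul_one_ne_zero hN hxpos.ne'

end bump

/-- every closed two-sided ideal of the Razak building block `A(n,n')` is the
vanishing ideal of a unique closed subset `S ⊆ [0,1]` with `0 ∈ S ↔ 1 ∈ S`. -/
theorem razak_building_block_ideals (n a : ℕ) (hn : 0 < n) (ha : 0 < a)
    (Idl : Set C(I01, Mat (n * (a + 1))))
    (hsub : Idl ⊆ razakA n a rfl)
    (hclosed : IsClosed Idl)
    (hzero : (0 : C(I01, Mat (n * (a + 1)))) ∈ Idl)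
    (hadd : ∀ f g, f ∈ Idl → g ∈ Idl → f + g ∈ Idl)
    (hsmul : ∀ (z : ℂ) (f), f ∈ Idl → z • f ∈ Idl)
    (hmul : ∀ f g, f ∈ Idl → g ∈ razakA n a rfl → f * g ∈ Idl ∧ g * f ∈ Idl) :
    ∃! S : Set I01, IsClosed S ∧ ((0 : I01) ∈ S ↔ (1 : I01) ∈ S) ∧
      Idl = {f | f ∈ razakA n a rfl ∧ ∀ x ∈ S, f x = 0} := by
  classical
  set S : Set I01 := {x | ∀ g ∈ Idl, g x = 0} with hSdef
  have hSclosed : IsClosed S := by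
    have e : S = ⋂ g ∈ Idl, (g ⁻¹' {0}) := by
      ext x
      simp [hSdef]
    rw [e]
    exact isClosed_biInter fun g _ => isClosed_singleton.preimage g.continuous
  have hSiff : ((0:I01) ∈ S ↔ (1:I01) ∈ S) := by
    constructor
    · intro h0 g hg
      exact (razak_zero_iff ha (hsub hg)).1 (h0 g hg)
    · intro h1 g hg
      exact (razak_zero_iff ha (hsub hg)).2 (h1 g hg)
  have hmain : Idl = {f | f ∈ razakA n a rfl ∧ ∀ x ∈ S, f x = 0} := by
    apply Set.Subset.antisymm
    · intro f hf
      exact ⟨hsub hf, fun x hx => hx f hf⟩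
    · rintro f ⟨hfA, hfS⟩
      rw [← hclosed.closure_eq, Metric.mem_closure_iff]
      intro ε hε
      obtain ⟨g, hgI, hgb⟩ := razak_approx ha hsub hzero hadd hsmul hmul hfA
        (fun x hx => hfS x hx) (half_pos hε)
      refine ⟨g, hgI, ?_⟩
      rw [dist_eq_norm]
      have : ‖f - g‖ ≤ ε / 2 := by
        rw [ContinuousMap.norm_le _ (half_pos hε).le]
        intro y
        simpa using hgb y
      linarith [half_lt_self hε]
  refine ⟨S, ⟨hSclosed, hSiff, hmain⟩, ?_⟩
  rintro T ⟨hTclosed, hTiff, hTeq⟩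
  apply Set.Subset.antisymm
  · -- T ⊆ S
    intro x hxT g hg
    rw [hTeq] at hg
    exact hg.2 x hxT
  · -- S ⊆ T
    intro x hxS
    by_contra hxT
    obtain ⟨f, hfA, hfT, hfx⟩ := bump hn ha hTclosed hTiff hxT
    have hfI : f ∈ Idl := by
      rw [hTeq]
      exact ⟨hfA, hfT⟩
    exact hfx (hxS f hfI)
end
end

section
/- Let n₁ and a be positive integers, set b = 2a+1, n₂ = b·n₁ and m = 2b, and define ξ_k : [0,1] → [0,1] by ξ_k(x) = x/2 for 1 ≤ k ≤ b, ξ_{b+1}(x) = 1/2 for all x, and ξ_k(x) = (x+1)/2 for b+2 ≤ k ≤ 2b. Then there exists a continuous map u from [0,1] into the unitary group of M_{(b+1)·n₂}(ℂ) such that the map φ defined by φ(f)(x) = u(x)·diag(f(ξ₁(x)), …, f(ξ_m(x)))·u(x)* sends A(n₁,(a+1)·n₁) into A(n₂,(b+1)·n₂), and the resulting map φ : A(n₁,(a+1)·n₁) → A(n₂,(b+1)·n₂) is an injective ⋆-algebra homomorphism. Moreover every ξ_k satisfies |ξ_k(x) − ξ_k(y)| ≤ 1/2 for all x, y ∈ [0,1],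 and the union of the images ξ₁([0,1]) ∪ … ∪ ξ_m([0,1]) equals [0,1]. -/
open scoped Matrix.Norms.L2Operator ComplexOrder
open Filter MeasureTheory

noncomputable section

namespace RzAux

/-- permutation-type unitary: `(U e) i j = if e i = j then 1 else 0`. -/
def U {S : ℕ} (e : Fin S ≃ Fin S) : Mat S := (1 : Mat S).submatrix e id

lemma U_apply {S : ℕ} (e : Fin S ≃ Fin S) (i j : Fin S) :
    U e i j = if e i = j then 1 else 0 := by
  simp [U, Matrix.one_apply]

lemma star_U {S : ℕ} (e : Fin S ≃ Fin S) : star (U e) = U e.symm := by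
  ext i j
  simp [U, Matrix.star_apply, Matrix.one_apply, eq_comm, Equiv.eq_symm_apply,
    apply_ite (starRingEnd ℂ)]

lemma U_mul_U {S : ℕ} (e e' : Fin S ≃ Fin S) : U e * U e' = U (e.trans e') := by
  ext i j
  rw [Matrix.mul_apply]
  simp only [U_apply]
  rw [Finset.sum_eq_single (e i)]
  · simp [Equiv.trans]; congr
  · intro b _ hb; simp [hb.symm]
  · simp

lemma U_refl {S : ℕ} : U (Equiv.refl (Fin S)) = 1 := by
  ext i j; simp [U_apply, Matrix.one_apply]; congr

lemma U_mem {S : ℕ} (e : Fin S ≃ Fin S) : U e ∈ Matrix.unitaryGroup (Fin S) ℂ := by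
  rw [Matrix.mem_unitaryGroup_iff, star_U, U_mul_U]
  simp [U_refl]

lemma U_conj {S : ℕ} (e : Fin S ≃ Fin S) (D : Mat S) :
    U e * D * star (U e) = D.submatrix e e := by
  rw [star_U]
  have h1 : U e * D = D.submatrix e id := by
    ext i j
    rw [Matrix.mul_apply]
    simp only [U_apply]
    rw [Finset.sum_eq_single (e i)]
    · simp
    · intro b _ hb; rw [if_neg (Ne.symm hb), zero_mul]
    · simp
  rw [h1]
  ext i j
  rw [Matrix.mul_apply]
  simp only [Matrix.submatrix_apply, U_apply, id_eq]
  rw [Finset.sum_eq_single (e j)]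
  · simp
  · intro b _ hb
    rw [if_neg (by rw [Equiv.symm_apply_eq]; exact hb), mul_zero]
  · simp

end RzAux

namespace RzAux

lemma swap_path {S : ℕ} (x y : Fin S) :
    ∃ v : C(I01, Mat S), (∀ t, v t ∈ Matrix.unitaryGroup (Fin S) ℂ) ∧
      v 0 = 1 ∧ v 1 = U (Equiv.swap x y) := by
  set T : Mat S := U (Equiv.swap x y) with hT
  have hTstar : star T = T := by rw [hT, star_U, Equiv.symm_swap]
  have hTsq : T * T = 1 := by
    rw [hT, U_mul_U, ← U_refl]
    congr 1
    ext z
    simp [Equiv.swap_apply_self]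
  set z : I01 → ℂ := fun t => Complex.exp (Real.pi * (t : ℝ) * Complex.I) with hz
  have hzc : Continuous z := by
    apply Complex.continuous_exp.comp
    fun_prop
  have hzU : ∀ t, z t * (starRingEnd ℂ) (z t) = 1 := by
    intro t
    rw [hz]
    rw [← Complex.exp_conj, ← Complex.exp_add]
    simp only [map_mul, Complex.conj_I, Complex.conj_ofReal]
    ring_nf
    exact Complex.exp_zero
  refine ⟨⟨fun t => ((1 + z t) / 2) • (1 : Mat S) + ((1 - z t) / 2) • T, by fun_prop⟩,
    ?_, ?_, ?_⟩
  · intro t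
    rw [Matrix.mem_unitaryGroup_iff]
    simp only [ContinuousMap.coe_mk]
    set α := (1 + z t) / 2
    set β := (1 - z t) / 2
    have : star (α • (1 : Mat S) + β • T)
        = (starRingEnd ℂ) α • (1 : Mat S) + (starRingEnd ℂ) β • T := by
      simp [star_add, star_smul, hTstar, RCLike.star_def]
    rw [this, add_mul, mul_add, mul_add]
    rw [smul_mul_smul_comm, smul_mul_smul_comm, smul_mul_smul_comm, smul_mul_smul_comm]
    simp only [one_mul, mul_one, hTsq]
    have h1 : α * (starRingEnd ℂ) α + β * (starRingEnd ℂ) β = 1 := by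
      simp only [α, β, map_div₀, map_add, map_sub, map_one, map_ofNat]
      linear_combination (hzU t) / 2
    have h2 : α * (starRingEnd ℂ) β + β * (starRingEnd ℂ) α = 0 := by
      simp only [α, β, map_div₀, map_add, map_sub, map_one, map_ofNat]
      linear_combination -(hzU t) / 2
    calc (α * (starRingEnd ℂ) α) • (1 : Mat S) + (α * (starRingEnd ℂ) β) • T
          + ((β * (starRingEnd ℂ) α) • T + (β * (starRingEnd ℂ) β) • (1 : Mat S))
        = (α * (starRingEnd ℂ) α + β * (starRingEnd ℂ) β) • (1 : Mat S)
          + (α * (starRingEnd ℂ) β + β * (starRingEnd ℂ) α) • T := by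
          simp only [add_smul]; abel
      _ = 1 := by rw [h1, h2]; simp
  · have : z 0 = 1 := by simp [hz]
    simp [ContinuousMap.coe_mk, this]
  · have : z 1 = -1 := by
      simp only [hz, Set.Icc.coe_one, Complex.ofReal_one, mul_one]
      exact Complex.exp_pi_mul_I
    rw [ContinuousMap.coe_mk, this]
    norm_num

lemma perm_path {S : ℕ} (σ : Equiv.Perm (Fin S)) :
    ∃ w : C(I01, Mat S), (∀ t, w t ∈ Matrix.unitaryGroup (Fin S) ℂ) ∧
      w 0 = 1 ∧ w 1 = U σ := by
  refine Equiv.Perm.swap_induction_on σ ?_ ?_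
  · exact ⟨ContinuousMap.const _ 1, fun t => by simp [Submonoid.one_mem], by simp, by
      rw [show (1 : Equiv.Perm (Fin S)) = Equiv.refl (Fin S) from rfl, U_refl]; simp⟩
  · rintro f x y hxy ⟨w, hwu, hw0, hw1⟩
    obtain ⟨v, hvu, hv0, hv1⟩ := swap_path x y
    refine ⟨⟨fun t => w t * v t, by fun_prop⟩, fun t => mul_mem (hwu t) (hvu t), ?_, ?_⟩
    · simp [hw0, hv0]
    · simp only [ContinuousMap.coe_mk, hw1, hv1, U_mul_U]
      rfl
end RzAux

namespace RzAux

def φe {k m N : ℕ} (h : k * m = N) : Fin k × Fin m ≃ Fin N :=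
  finProdFinEquiv.trans (finCongr h)

lemma cdiag_apply' {k m N : ℕ} (h : k * m = N) (M : Fin m → Mat k) (p q : Fin k × Fin m) :
    cdiag h M (φe h p) (φe h q) = if p.2 = q.2 then M p.2 p.1 q.1 else 0 := by
  simp only [cdiag, Matrix.reindex_apply, Matrix.submatrix_apply, φe,
    Equiv.symm_apply_apply, Matrix.blockDiagonal_apply]

lemma eq_cdiag {k m N : ℕ} (h : k * m = N) (X : Mat N) (M : Fin m → Mat k)
    (H : ∀ p q : Fin k × Fin m,
      X (φe h p) (φe h q) = if p.2 = q.2 then M p.2 p.1 q.1 else 0) :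
    X = cdiag h M := by
  ext i j
  have := H ((φe h).symm i) ((φe h).symm j)
  rw [Equiv.apply_symm_apply, Equiv.apply_symm_apply] at this
  rw [this, ← cdiag_apply' h M, Equiv.apply_symm_apply, Equiv.apply_symm_apply]

section Maps
variable (n a : ℕ)

/-- target-to-source coordinate map at `x = 0`. -/
def h0 : (Fin n × Fin (2 * a + 1)) × Fin (2 * a + 1 + 1)
    → (Fin n × Fin (a + 1)) × Fin (2 * (2 * a + 1)) := fun x =>
  if hK : (x.2 : ℕ) < 2 * a + 1 then
    if ht : (x.1.2 : ℕ) < a + 1 then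
      ((x.1.1, ⟨x.1.2, ht⟩), ⟨(x.2 : ℕ) + (2 * a + 1), by omega⟩)
    else
      ((x.1.1, ⟨(x.1.2 : ℕ) - (a + 1), by omega⟩), ⟨(x.2 : ℕ), by omega⟩)
  else ((x.1.1, ⟨a, by omega⟩), ⟨(x.1.2 : ℕ), by omega⟩)

/-- target-to-source coordinate map at `x = 1`. -/
def h1 : (Fin n × Fin (2 * a + 1)) × Fin (2 * a + 1 + 1)
    → (Fin n × Fin (a + 1)) × Fin (2 * (2 * a + 1)) := fun x =>
  if ht : (x.1.2 : ℕ) < a + 1 then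
    ((x.1.1, ⟨x.1.2, ht⟩), ⟨(x.2 : ℕ), by omega⟩)
  else if hK : (x.2 : ℕ) < a + 1 then
    ((x.1.1, ⟨(x.2 : ℕ), hK⟩), ⟨2 * a + 1 + 1 + ((x.1.2 : ℕ) - (a + 1)), by omega⟩)
  else
    ((x.1.1, ⟨(x.2 : ℕ) - (a + 1), by omega⟩), ⟨3 * a + 2 + ((x.1.2 : ℕ) - (a + 1)), by omega⟩)

lemma h0_inj : Function.Injective (h0 n a) := by
  rintro ⟨⟨r, t⟩, K⟩ ⟨⟨r', t'⟩, L⟩ h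
  unfold h0 at h
  dsimp only at h
  split_ifs at h <;>
    (simp only [Prod.mk.injEq, Fin.mk.injEq, Fin.ext_iff] at h ⊢; omega)

lemma h1_inj : Function.Injective (h1 n a) := by
  rintro ⟨⟨r, t⟩, K⟩ ⟨⟨r', t'⟩, L⟩ h
  unfold h1 at h
  dsimp only at h
  split_ifs at h <;>
    (simp only [Prod.mk.injEq, Fin.mk.injEq, Fin.ext_iff] at h ⊢; omega)

end Maps

section K
variable (n a : ℕ)

lemma mat_ite_apply (P : Prop) [Decidable P] {k : ℕ} (A B : Mat k) (i j : Fin k) :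
    (if P then A else B) i j = if P then A i j else B i j := by split_ifs <;> rfl

def cp (F : Mat (n * (a + 1))) (c : Mat n) : Mat (n * (2 * a + 1)) := fun P Q =>
  let x := (φe (rfl : n * (2 * a + 1) = n * (2 * a + 1))).symm P
  let y := (φe (rfl : n * (2 * a + 1) = n * (2 * a + 1))).symm Q
  if hx : (x.2 : ℕ) < a + 1 then
    if hy : (y.2 : ℕ) < a + 1 then
      F (φe rfl (x.1, ⟨x.2, hx⟩)) (φe rfl (y.1, ⟨y.2, hy⟩))
    else 0
  else if (y.2 : ℕ) < a + 1 then 0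
  else if (x.2 : ℕ) = (y.2 : ℕ) then c x.1 y.1 else 0

lemma cp_apply (F : Mat (n * (a + 1))) (c : Mat n) (r r' : Fin n) (t t' : Fin (2 * a + 1)) :
    cp n a F c (φe rfl (r, t)) (φe rfl (r', t')) =
      if hx : (t : ℕ) < a + 1 then
        if hy : (t' : ℕ) < a + 1 then
          F (φe rfl (r, ⟨t, hx⟩)) (φe rfl (r', ⟨t', hy⟩))
        else 0
      else if (t' : ℕ) < a + 1 then 0
      else if (t : ℕ) = (t' : ℕ) then c r r' else 0 := by
  simp only [cp, Equiv.symm_apply_apply]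

lemma h0_bij : Function.Bijective (h0 n a) := by
  rw [Fintype.bijective_iff_injective_and_card]
  exact ⟨h0_inj n a, by simp [Fintype.card_prod]; ring⟩

lemma h1_bij : Function.Bijective (h1 n a) := by
  rw [Fintype.bijective_iff_injective_and_card]
  exact ⟨h1_inj n a, by simp [Fintype.card_prod]; ring⟩

def e0 (hN : n * (2 * a + 1) * (2 * a + 1 + 1) = n * (a + 1) * (2 * (2 * a + 1))) :
    Fin (n * (a + 1) * (2 * (2 * a + 1))) ≃ Fin (n * (a + 1) * (2 * (2 * a + 1))) :=
  (φe hN).symm.trans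
    ((Equiv.prodCongr (φe (rfl : n * (2 * a + 1) = n * (2 * a + 1))).symm (Equiv.refl _)).trans
      ((Equiv.ofBijective (h0 n a) (h0_bij n a)).trans
        ((Equiv.prodCongr (φe (rfl : n * (a + 1) = n * (a + 1))) (Equiv.refl _)).trans
          (φe rfl))))

def e1 (hN : n * (2 * a + 1) * (2 * a + 1 + 1) = n * (a + 1) * (2 * (2 * a + 1))) :
    Fin (n * (a + 1) * (2 * (2 * a + 1))) ≃ Fin (n * (a + 1) * (2 * (2 * a + 1))) :=
  (φe hN).symm.trans
    ((Equiv.prodCongr (φe (rfl : n * (2 * a + 1) = n * (2 * a + 1))).symm (Equiv.refl _)).trans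
      ((Equiv.ofBijective (h1 n a) (h1_bij n a)).trans
        ((Equiv.prodCongr (φe (rfl : n * (a + 1) = n * (a + 1))) (Equiv.refl _)).trans
          (φe rfl))))

lemma e0_apply (hN : n * (2 * a + 1) * (2 * a + 1 + 1) = n * (a + 1) * (2 * (2 * a + 1)))
    (rt : Fin n × Fin (2 * a + 1)) (K : Fin (2 * a + 1 + 1)) :
    e0 n a hN (φe hN (φe rfl rt, K)) =
      φe rfl (φe rfl (h0 n a (rt, K)).1, (h0 n a (rt, K)).2) := by
  simp [e0, Equiv.trans_apply, Equiv.prodCongr_apply, Equiv.symm_apply_apply,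
    Equiv.ofBijective_apply, Prod.map]

lemma e1_apply (hN : n * (2 * a + 1) * (2 * a + 1 + 1) = n * (a + 1) * (2 * (2 * a + 1)))
    (rt : Fin n × Fin (2 * a + 1)) (K : Fin (2 * a + 1 + 1)) :
    e1 n a hN (φe hN (φe rfl rt, K)) =
      φe rfl (φe rfl (h1 n a (rt, K)).1, (h1 n a (rt, K)).2) := by
  simp [e1, Equiv.trans_apply, Equiv.prodCongr_apply, Equiv.symm_apply_apply,
    Equiv.ofBijective_apply, Prod.map]



lemma valmk {N v : ℕ} (h : v < N) : ((⟨v, h⟩ : Fin N) : ℕ) = v := rfl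

lemma h0_F (r : Fin n) (t : Fin (2 * a + 1)) (K : Fin (2 * a + 1 + 1))
    (hK : (K : ℕ) < 2 * a + 1) (ht : (t : ℕ) < a + 1) :
    h0 n a ((r, t), K) = ((r, ⟨t, ht⟩), ⟨(K : ℕ) + (2 * a + 1), by omega⟩) := by
  unfold h0; dsimp only; rw [dif_pos hK, dif_pos ht]

lemma h0_C (r : Fin n) (t : Fin (2 * a + 1)) (K : Fin (2 * a + 1 + 1))
    (hK : (K : ℕ) < 2 * a + 1) (ht : ¬ (t : ℕ) < a + 1) :
    h0 n a ((r, t), K) = ((r, ⟨(t : ℕ) - (a + 1), by omega⟩), ⟨(K : ℕ), by omega⟩) := by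
  unfold h0; dsimp only; rw [dif_pos hK, dif_neg ht]

lemma h0_Z (r : Fin n) (t : Fin (2 * a + 1)) (K : Fin (2 * a + 1 + 1))
    (hK : ¬ (K : ℕ) < 2 * a + 1) :
    h0 n a ((r, t), K) = ((r, ⟨a, by omega⟩), ⟨(t : ℕ), by omega⟩) := by
  unfold h0; dsimp only; rw [dif_neg hK]

lemma h1_F (r : Fin n) (t : Fin (2 * a + 1)) (K : Fin (2 * a + 1 + 1))
    (ht : (t : ℕ) < a + 1) :
    h1 n a ((r, t), K) = ((r, ⟨t, ht⟩), ⟨(K : ℕ), by omega⟩) := by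
  unfold h1; dsimp only; rw [dif_pos ht]

lemma h1_C (r : Fin n) (t : Fin (2 * a + 1)) (K : Fin (2 * a + 1 + 1))
    (ht : ¬ (t : ℕ) < a + 1) (hK : (K : ℕ) < a + 1) :
    h1 n a ((r, t), K) =
      ((r, ⟨(K : ℕ), hK⟩), ⟨2 * a + 1 + 1 + ((t : ℕ) - (a + 1)), by omega⟩) := by
  unfold h1; dsimp only; rw [dif_neg ht, dif_pos hK]

lemma h1_D (r : Fin n) (t : Fin (2 * a + 1)) (K : Fin (2 * a + 1 + 1))
    (ht : ¬ (t : ℕ) < a + 1) (hK : ¬ (K : ℕ) < a + 1) :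
    h1 n a ((r, t), K) =
      ((r, ⟨(K : ℕ) - (a + 1), by omega⟩), ⟨3 * a + 2 + ((t : ℕ) - (a + 1)), by omega⟩) := by
  unfold h1; dsimp only; rw [dif_neg ht, dif_neg hK]

set_option maxHeartbeats 2000000 in
lemma key0 (hN : n * (2 * a + 1) * (2 * a + 1 + 1) = n * (a + 1) * (2 * (2 * a + 1)))
    (F : Mat (n * (a + 1))) (c : Mat n) (src : Fin (2 * (2 * a + 1)) → Mat (n * (a + 1)))
    (hsrc1 : ∀ k : Fin (2 * (2 * a + 1)), (k : ℕ) < 2 * a + 1 →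
      src k = cdiag rfl (fun i : Fin (a + 1) => if (i : ℕ) < a then c else 0))
    (hsrc2 : ∀ k : Fin (2 * (2 * a + 1)), 2 * a + 1 ≤ (k : ℕ) → src k = F) :
    (cdiag rfl src).submatrix (e0 n a hN) (e0 n a hN)
      = cdiag hN (fun i : Fin (2 * a + 1 + 1) =>
          if (i : ℕ) < 2 * a + 1 then cp n a F c else 0) := by
  apply eq_cdiag
  rintro ⟨P, K⟩ ⟨Q, L⟩
  obtain ⟨⟨r, t⟩, rfl⟩ := (φe (rfl : n * (2 * a + 1) = n * (2 * a + 1))).surjective P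
  obtain ⟨⟨r', t'⟩, rfl⟩ := (φe (rfl : n * (2 * a + 1) = n * (2 * a + 1))).surjective Q
  dsimp only
  rw [Matrix.submatrix_apply, e0_apply, e0_apply]
  have hb1 := t.isLt; have hb2 := t'.isLt; have hb3 := K.isLt; have hb4 := L.isLt
  by_cases hK : (K : ℕ) < 2 * a + 1 <;> by_cases hL : (L : ℕ) < 2 * a + 1 <;>
    by_cases ht : (t : ℕ) < a + 1 <;> by_cases ht' : (t' : ℕ) < a + 1
  · rw [h0_F n a r t K hK ht, h0_F n a r' t' L hL ht']
    dsimp only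
    rw [cdiag_apply']
    dsimp only
    rw [hsrc2 ⟨(K : ℕ) + (2 * a + 1), by omega⟩ (Nat.le_add_left _ _),
      mat_ite_apply, if_pos hK, cp_apply]
    simp only [Fin.mk.injEq, Fin.ext_iff, valmk, mat_ite_apply]
    split_ifs <;> first | rfl | (exfalso; omega)
  · rw [h0_F n a r t K hK ht, h0_C n a r' t' L hL ht']
    dsimp only
    rw [cdiag_apply']
    dsimp only
    rw [hsrc2 ⟨(K : ℕ) + (2 * a + 1), by omega⟩ (Nat.le_add_left _ _),
      mat_ite_apply, if_pos hK, cp_apply]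
    simp only [Fin.mk.injEq, Fin.ext_iff, valmk, mat_ite_apply]
    split_ifs <;> first | rfl | (exfalso; omega)
  · rw [h0_C n a r t K hK ht, h0_F n a r' t' L hL ht']
    dsimp only
    rw [cdiag_apply']
    dsimp only
    rw [hsrc1 ⟨(K : ℕ), by omega⟩ hK, cdiag_apply']
    dsimp only
    rw [mat_ite_apply, if_pos hK, cp_apply]
    simp only [Fin.mk.injEq, Fin.ext_iff, valmk, mat_ite_apply]
    split_ifs <;> first | rfl | (exfalso; omega)
  · rw [h0_C n a r t K hK ht, h0_C n a r' t' L hL ht']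
    dsimp only
    rw [cdiag_apply']
    dsimp only
    rw [hsrc1 ⟨(K : ℕ), by omega⟩ hK, cdiag_apply']
    dsimp only
    rw [mat_ite_apply, if_pos hK, cp_apply]
    simp only [Fin.mk.injEq, Fin.ext_iff, valmk, mat_ite_apply]
    split_ifs <;> first | rfl | (exfalso; omega)
  · rw [h0_F n a r t K hK ht, h0_Z n a r' t' L hL]
    dsimp only
    rw [cdiag_apply']
    dsimp only
    rw [hsrc2 ⟨(K : ℕ) + (2 * a + 1), by omega⟩ (Nat.le_add_left _ _),
      mat_ite_apply, if_pos hK, cp_apply]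
    simp only [Fin.mk.injEq, Fin.ext_iff, valmk, mat_ite_apply]
    split_ifs <;> first | rfl | (exfalso; omega)
  · rw [h0_F n a r t K hK ht, h0_Z n a r' t' L hL]
    dsimp only
    rw [cdiag_apply']
    dsimp only
    rw [hsrc2 ⟨(K : ℕ) + (2 * a + 1), by omega⟩ (Nat.le_add_left _ _),
      mat_ite_apply, if_pos hK, cp_apply]
    simp only [Fin.mk.injEq, Fin.ext_iff, valmk, mat_ite_apply]
    split_ifs <;> first | rfl | (exfalso; omega)
  · rw [h0_C n a r t K hK ht, h0_Z n a r' t' L hL]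
    dsimp only
    rw [cdiag_apply']
    dsimp only
    rw [hsrc1 ⟨(K : ℕ), by omega⟩ hK, cdiag_apply']
    dsimp only
    rw [mat_ite_apply, if_pos hK, cp_apply]
    simp only [Fin.mk.injEq, Fin.ext_iff, valmk, mat_ite_apply]
    split_ifs <;> first | rfl | (exfalso; omega)
  · rw [h0_C n a r t K hK ht, h0_Z n a r' t' L hL]
    dsimp only
    rw [cdiag_apply']
    dsimp only
    rw [hsrc1 ⟨(K : ℕ), by omega⟩ hK, cdiag_apply']
    dsimp only
    rw [mat_ite_apply, if_pos hK, cp_apply]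
    simp only [Fin.mk.injEq, Fin.ext_iff, valmk, mat_ite_apply]
    split_ifs <;> first | rfl | (exfalso; omega)
  · rw [h0_Z n a r t K hK, h0_F n a r' t' L hL ht']
    dsimp only
    rw [cdiag_apply']
    dsimp only
    rw [hsrc1 ⟨(t : ℕ), by omega⟩ t.isLt, cdiag_apply']
    dsimp only
    rw [mat_ite_apply, if_neg hK, Matrix.zero_apply]
    simp only [Fin.mk.injEq, Fin.ext_iff, valmk, mat_ite_apply]
    split_ifs <;> first | rfl | (exfalso; omega)
  · rw [h0_Z n a r t K hK, h0_C n a r' t' L hL ht']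
    dsimp only
    rw [cdiag_apply']
    dsimp only
    rw [hsrc1 ⟨(t : ℕ), by omega⟩ t.isLt, cdiag_apply']
    dsimp only
    rw [mat_ite_apply, if_neg hK, Matrix.zero_apply]
    simp only [Fin.mk.injEq, Fin.ext_iff, valmk, mat_ite_apply]
    split_ifs <;> first | rfl | (exfalso; omega)
  · rw [h0_Z n a r t K hK, h0_F n a r' t' L hL ht']
    dsimp only
    rw [cdiag_apply']
    dsimp only
    rw [hsrc1 ⟨(t : ℕ), by omega⟩ t.isLt, cdiag_apply']
    dsimp only
    rw [mat_ite_apply, if_neg hK, Matrix.zero_apply]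
    simp only [Fin.mk.injEq, Fin.ext_iff, valmk, mat_ite_apply]
    split_ifs <;> first | rfl | (exfalso; omega)
  · rw [h0_Z n a r t K hK, h0_C n a r' t' L hL ht']
    dsimp only
    rw [cdiag_apply']
    dsimp only
    rw [hsrc1 ⟨(t : ℕ), by omega⟩ t.isLt, cdiag_apply']
    dsimp only
    rw [mat_ite_apply, if_neg hK, Matrix.zero_apply]
    simp only [Fin.mk.injEq, Fin.ext_iff, valmk, mat_ite_apply]
    split_ifs <;> first | rfl | (exfalso; omega)
  · rw [h0_Z n a r t K hK, h0_Z n a r' t' L hL]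
    dsimp only
    rw [cdiag_apply']
    dsimp only
    rw [hsrc1 ⟨(t : ℕ), by omega⟩ t.isLt, cdiag_apply']
    dsimp only
    rw [mat_ite_apply, if_neg hK, Matrix.zero_apply]
    simp only [Fin.mk.injEq, Fin.ext_iff, valmk, mat_ite_apply]
    split_ifs <;> first | rfl | (exfalso; omega)
  · rw [h0_Z n a r t K hK, h0_Z n a r' t' L hL]
    dsimp only
    rw [cdiag_apply']
    dsimp only
    rw [hsrc1 ⟨(t : ℕ), by omega⟩ t.isLt, cdiag_apply']
    dsimp only
    rw [mat_ite_apply, if_neg hK, Matrix.zero_apply]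
    simp only [Fin.mk.injEq, Fin.ext_iff, valmk, mat_ite_apply]
    split_ifs <;> first | rfl | (exfalso; omega)
  · rw [h0_Z n a r t K hK, h0_Z n a r' t' L hL]
    dsimp only
    rw [cdiag_apply']
    dsimp only
    rw [hsrc1 ⟨(t : ℕ), by omega⟩ t.isLt, cdiag_apply']
    dsimp only
    rw [mat_ite_apply, if_neg hK, Matrix.zero_apply]
    simp only [Fin.mk.injEq, Fin.ext_iff, valmk, mat_ite_apply]
    split_ifs <;> first | rfl | (exfalso; omega)
  · rw [h0_Z n a r t K hK, h0_Z n a r' t' L hL]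
    dsimp only
    rw [cdiag_apply']
    dsimp only
    rw [hsrc1 ⟨(t : ℕ), by omega⟩ t.isLt, cdiag_apply']
    dsimp only
    rw [mat_ite_apply, if_neg hK, Matrix.zero_apply]
    simp only [Fin.mk.injEq, Fin.ext_iff, valmk, mat_ite_apply]
    split_ifs <;> first | rfl | (exfalso; omega)

set_option maxHeartbeats 2000000 in
lemma key1 (hN : n * (2 * a + 1) * (2 * a + 1 + 1) = n * (a + 1) * (2 * (2 * a + 1)))
    (F : Mat (n * (a + 1))) (c : Mat n) (src : Fin (2 * (2 * a + 1)) → Mat (n * (a + 1)))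
    (hsrc1 : ∀ k : Fin (2 * (2 * a + 1)), (k : ℕ) ≤ 2 * a + 1 → src k = F)
    (hsrc2 : ∀ k : Fin (2 * (2 * a + 1)), 2 * a + 1 < (k : ℕ) →
      src k = cdiag rfl (fun _ : Fin (a + 1) => c)) :
    (cdiag rfl src).submatrix (e1 n a hN) (e1 n a hN)
      = cdiag hN (fun _ : Fin (2 * a + 1 + 1) => cp n a F c) := by
  apply eq_cdiag
  rintro ⟨P, K⟩ ⟨Q, L⟩
  obtain ⟨⟨r, t⟩, rfl⟩ := (φe (rfl : n * (2 * a + 1) = n * (2 * a + 1))).surjective P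
  obtain ⟨⟨r', t'⟩, rfl⟩ := (φe (rfl : n * (2 * a + 1) = n * (2 * a + 1))).surjective Q
  dsimp only
  rw [Matrix.submatrix_apply, e1_apply, e1_apply]
  have hb1 := t.isLt; have hb2 := t'.isLt; have hb3 := K.isLt; have hb4 := L.isLt
  by_cases ht : (t : ℕ) < a + 1 <;> by_cases ht' : (t' : ℕ) < a + 1
  · -- F F
    rw [h1_F n a r t K ht, h1_F n a r' t' L ht']
    dsimp only
    rw [cdiag_apply']
    dsimp only
    rw [hsrc1 ⟨(K : ℕ), by omega⟩ (by exact Nat.lt_succ_iff.mp hb3), cp_apply]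
    simp only [Fin.mk.injEq, Fin.ext_iff, valmk, mat_ite_apply]
    split_ifs <;> first | rfl | (exfalso; omega)
  · -- F, C/D
    by_cases hLa : (L : ℕ) < a + 1
    · rw [h1_F n a r t K ht, h1_C n a r' t' L ht' hLa]
      dsimp only
      rw [cdiag_apply']
      dsimp only
      rw [hsrc1 ⟨(K : ℕ), by omega⟩ (by exact Nat.lt_succ_iff.mp hb3), cp_apply]
      simp only [Fin.mk.injEq, Fin.ext_iff, valmk, mat_ite_apply]
      split_ifs <;> first | rfl | (exfalso; omega)
    · rw [h1_F n a r t K ht, h1_D n a r' t' L ht' hLa]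
      dsimp only
      rw [cdiag_apply']
      dsimp only
      rw [hsrc1 ⟨(K : ℕ), by omega⟩ (by exact Nat.lt_succ_iff.mp hb3), cp_apply]
      simp only [Fin.mk.injEq, Fin.ext_iff, valmk, mat_ite_apply]
      split_ifs <;> first | rfl | (exfalso; omega)
  · -- C/D, F
    by_cases hKa : (K : ℕ) < a + 1
    · rw [h1_C n a r t K ht hKa, h1_F n a r' t' L ht']
      dsimp only
      rw [cdiag_apply']
      dsimp only
      rw [hsrc2 ⟨2 * a + 1 + 1 + ((t : ℕ) - (a + 1)), by omega⟩
        (Nat.lt_of_lt_of_le (Nat.lt_succ_self _) (Nat.le_add_right _ _)), cdiag_apply']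
      dsimp only
      rw [cp_apply]
      simp only [Fin.mk.injEq, Fin.ext_iff, valmk, mat_ite_apply]
      split_ifs <;> first | rfl | (exfalso; omega)
    · rw [h1_D n a r t K ht hKa, h1_F n a r' t' L ht']
      dsimp only
      rw [cdiag_apply']
      dsimp only
      rw [hsrc2 ⟨3 * a + 2 + ((t : ℕ) - (a + 1)), by omega⟩
        (Nat.lt_of_lt_of_le (by omega) (Nat.le_add_right _ _)), cdiag_apply']
      dsimp only
      rw [cp_apply]
      simp only [Fin.mk.injEq, Fin.ext_iff, valmk, mat_ite_apply]
      split_ifs <;> first | rfl | (exfalso; omega)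
  · by_cases hKa : (K : ℕ) < a + 1 <;> by_cases hLa : (L : ℕ) < a + 1
    · rw [h1_C n a r t K ht hKa, h1_C n a r' t' L ht' hLa]
      dsimp only
      rw [cdiag_apply']
      dsimp only
      rw [hsrc2 ⟨2 * a + 1 + 1 + ((t : ℕ) - (a + 1)), by omega⟩
        (Nat.lt_of_lt_of_le (Nat.lt_succ_self _) (Nat.le_add_right _ _)), cdiag_apply']
      dsimp only
      rw [cp_apply]
      simp only [Fin.mk.injEq, Fin.ext_iff, valmk, mat_ite_apply]
      split_ifs <;> first | rfl | (exfalso; omega)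
    · rw [h1_C n a r t K ht hKa, h1_D n a r' t' L ht' hLa]
      dsimp only
      rw [cdiag_apply']
      dsimp only
      rw [hsrc2 ⟨2 * a + 1 + 1 + ((t : ℕ) - (a + 1)), by omega⟩
        (Nat.lt_of_lt_of_le (Nat.lt_succ_self _) (Nat.le_add_right _ _)), cdiag_apply']
      dsimp only
      rw [cp_apply]
      simp only [Fin.mk.injEq, Fin.ext_iff, valmk, mat_ite_apply]
      split_ifs <;> first | rfl | (exfalso; omega)
    · rw [h1_D n a r t K ht hKa, h1_C n a r' t' L ht' hLa]
      dsimp only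
      rw [cdiag_apply']
      dsimp only
      rw [hsrc2 ⟨3 * a + 2 + ((t : ℕ) - (a + 1)), by omega⟩
        (Nat.lt_of_lt_of_le (by omega) (Nat.le_add_right _ _)), cdiag_apply']
      dsimp only
      rw [cp_apply]
      simp only [Fin.mk.injEq, Fin.ext_iff, valmk, mat_ite_apply]
      split_ifs <;> first | rfl | (exfalso; omega)
    · rw [h1_D n a r t K ht hKa, h1_D n a r' t' L ht' hLa]
      dsimp only
      rw [cdiag_apply']
      dsimp only
      rw [hsrc2 ⟨3 * a + 2 + ((t : ℕ) - (a + 1)), by omega⟩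
        (Nat.lt_of_lt_of_le (by omega) (Nat.le_add_right _ _)), cdiag_apply']
      dsimp only
      rw [cp_apply]
      simp only [Fin.mk.injEq, Fin.ext_iff, valmk, mat_ite_apply]
      split_ifs <;> first | rfl | (exfalso; omega)

end K
end RzAux


namespace RzAux

lemma cdiag_add {k m N : ℕ} (h : k * m = N) (M M' : Fin m → Mat k) :
    cdiag h M + cdiag h M' = cdiag h (fun i => M i + M' i) := by
  apply eq_cdiag
  intro p q
  rw [Matrix.add_apply, cdiag_apply', cdiag_apply']
  split_ifs <;> simp

lemma cdiag_smul {k m N : ℕ} (h : k * m = N) (z : ℂ) (M : Fin m → Mat k) :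
    z • cdiag h M = cdiag h (fun i => z • M i) := by
  apply eq_cdiag
  intro p q
  rw [Matrix.smul_apply, cdiag_apply']
  split_ifs <;> simp

lemma cdiag_star {k m N : ℕ} (h : k * m = N) (M : Fin m → Mat k) :
    star (cdiag h M) = cdiag h (fun i => star (M i)) := by
  apply eq_cdiag
  rintro ⟨i, k'⟩ ⟨j, l⟩
  rw [Matrix.star_apply, cdiag_apply']
  dsimp only
  by_cases hc : k' = l
  · subst hc; simp [Matrix.star_apply]
  · simp [hc, Ne.symm hc]

lemma cdiag_mul {k m N : ℕ} (h : k * m = N) (M M' : Fin m → Mat k) :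
    cdiag h M * cdiag h M' = cdiag h (fun i => M i * M' i) := by
  unfold cdiag
  rw [Matrix.reindex_apply, Matrix.reindex_apply, Matrix.reindex_apply,
    Matrix.submatrix_mul_equiv, Matrix.blockDiagonal_mul]

lemma cdiag_inj {k m N : ℕ} (h : k * m = N) {M M' : Fin m → Mat k}
    (H : cdiag h M = cdiag h M') : M = M' := by
  funext i
  ext p q
  have := congrArg (fun X => X (φe h (p, i)) (φe h (q, i))) H
  simpa only [cdiag_apply', if_pos rfl, ↓reduceIte] using this

lemma conj_cancel {N : ℕ} (u : Mat N) (h1 : star u * u = 1) {A B : Mat N}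
    (h : u * A * star u = u * B * star u) : A = B := by
  have e : ∀ C : Mat N, star u * (u * C * star u) * u = C := by
    intro C
    calc star u * (u * C * star u) * u
        = (star u * u) * C * (star u * u) := by
          simp only [Matrix.mul_assoc]
      _ = C := by rw [h1, Matrix.one_mul, Matrix.mul_one]
  have := congrArg (fun M => star u * M * u) h
  rwa [e, e] at this

end RzAux

/-- existence of the standard-form connecting map
`φ : A(n₁, (a+1)n₁) → A(n₂, (b+1)n₂)` (with `b = 2a+1`, `n₂ = b·n₁`, `m = 2b`) given by
`φ(f)(x) = u(x)·diag(f(ξ₁(x)), …, f(ξ_m(x)))·u(x)*`, which is an injective ⋆-algebra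
homomorphism; moreover each `ξ_k` has variation at most `1/2` and the images of the `ξ_k`
cover `[0,1]`. -/
theorem razak_connecting_map_exists (n₁ a : ℕ) (hn : 0 < n₁) (ha : 0 < a)
    (ξ : Fin (2 * (2 * a + 1)) → I01 → I01)
    (hξ : ∀ (k : Fin (2 * (2 * a + 1))) (x : I01),
      ((ξ k x : ℝ)) = if (k : ℕ) < 2 * a + 1 then (x : ℝ) / 2
        else if (k : ℕ) = 2 * a + 1 then 1 / 2 else ((x : ℝ) + 1) / 2) :
    ∃ u : C(I01, Mat (n₁ * (a + 1) * (2 * (2 * a + 1)))),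
      (∀ x : I01, u x ∈ Matrix.unitaryGroup (Fin (n₁ * (a + 1) * (2 * (2 * a + 1)))) ℂ) ∧
      ∃ Φ : C(I01, Mat (n₁ * (a + 1))) → C(I01, Mat (n₁ * (a + 1) * (2 * (2 * a + 1)))),
        (∀ (f : C(I01, Mat (n₁ * (a + 1)))) (x : I01),
          Φ f x = u x * cdiag rfl (fun k => f (ξ k x)) * star (u x)) ∧
        (∀ f ∈ razakA n₁ a rfl,
          Φ f ∈ razakA (n₁ * (2 * a + 1)) (2 * a + 1)
            (show n₁ * (2 * a + 1) * (2 * a + 1 + 1) = n₁ * (a + 1) * (2 * (2 * a + 1))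
              by ring)) ∧
        (∀ f g, f ∈ razakA n₁ a rfl → g ∈ razakA n₁ a rfl → Φ (f + g) = Φ f + Φ g) ∧
        (∀ (z : ℂ) (f), f ∈ razakA n₁ a rfl → Φ (z • f) = z • Φ f) ∧
        (∀ f g, f ∈ razakA n₁ a rfl → g ∈ razakA n₁ a rfl → Φ (f * g) = Φ f * Φ g) ∧
        (∀ f, f ∈ razakA n₁ a rfl → Φ (star f) = star (Φ f)) ∧
        (∀ f g, f ∈ razakA n₁ a rfl → g ∈ razakA n₁ a rfl → Φ f = Φ g → f = g) ∧
        (∀ (k : Fin (2 * (2 * a + 1))) (x y : I01), |(ξ k x : ℝ) - (ξ k y : ℝ)| ≤ 1 / 2) ∧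
        (⋃ k, Set.range (ξ k)) = (Set.univ : Set I01) := by
  classical
  have hN : n₁ * (2 * a + 1) * (2 * a + 1 + 1) = n₁ * (a + 1) * (2 * (2 * a + 1)) := by ring
  set ω : I01 := ⟨1 / 2, by constructor <;> norm_num⟩ with hωdef
  -- endpoint values of ξ
  have hξ0a : ∀ k : Fin (2 * (2 * a + 1)), (k : ℕ) < 2 * a + 1 → ξ k 0 = 0 := by
    intro k hk
    apply Subtype.ext
    rw [hξ k 0, if_pos hk]
    norm_num
  have hξ0b : ∀ k : Fin (2 * (2 * a + 1)), 2 * a + 1 ≤ (k : ℕ) → ξ k 0 = ω := by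
    intro k hk
    apply Subtype.ext
    rw [hξ k 0, if_neg (by omega)]
    rcases eq_or_lt_of_le hk with h | h
    · rw [if_pos h.symm]
    · rw [if_neg (by omega)]
      norm_num
  have hξ1a : ∀ k : Fin (2 * (2 * a + 1)), (k : ℕ) ≤ 2 * a + 1 → ξ k 1 = ω := by
    intro k hk
    apply Subtype.ext
    rw [hξ k 1]
    rcases eq_or_lt_of_le hk with h | h
    · rw [if_neg (by omega), if_pos h]
    · rw [if_pos h]
      norm_num
  have hξ1b : ∀ k : Fin (2 * (2 * a + 1)), 2 * a + 1 < (k : ℕ) → ξ k 1 = 1 := by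
    intro k hk
    apply Subtype.ext
    rw [hξ k 1, if_neg (by omega), if_neg (by omega)]
    norm_num
  have hξcont : ∀ k, Continuous (ξ k) := by
    intro k
    apply continuous_induced_rng.mpr
    have e : (fun x : I01 => ((ξ k x : ℝ)))
        = fun x : I01 => if (k : ℕ) < 2 * a + 1 then (x : ℝ) / 2
            else if (k : ℕ) = 2 * a + 1 then 1 / 2 else ((x : ℝ) + 1) / 2 :=
      funext fun x => hξ k x
    show Continuous fun x : I01 => ((ξ k x : ℝ))
    rw [e]
    by_cases h1 : (k : ℕ) < 2 * a + 1
    · simp only [if_pos h1]; fun_prop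
    · by_cases h2 : (k : ℕ) = 2 * a + 1
      · simp only [if_neg h1, if_pos h2]; fun_prop
      · simp only [if_neg h1, if_neg h2]; fun_prop
  have hcover : ∀ y : I01, ∃ k x, ξ k x = y := by
    intro y
    have hy0 := y.2.1; have hy1 := y.2.2
    rcases le_or_gt (y : ℝ) (1 / 2) with hy | hy
    · refine ⟨⟨0, by omega⟩, ⟨2 * (y : ℝ), ⟨by linarith, by linarith⟩⟩, ?_⟩
      apply Subtype.ext
      rw [hξ, if_pos (show ((⟨0, by omega⟩ : Fin (2 * (2 * a + 1))) : ℕ) < 2 * a + 1 by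
        simp only [RzAux.valmk]; omega)]
      show (2 * (y : ℝ)) / 2 = (y : ℝ)
      ring
    · refine ⟨⟨2 * (2 * a + 1) - 1, by omega⟩, ⟨2 * (y : ℝ) - 1, ⟨by linarith, by linarith⟩⟩, ?_⟩
      apply Subtype.ext
      rw [hξ]
      rw [if_neg (show ¬ ((⟨2 * (2 * a + 1) - 1, by omega⟩ : Fin (2 * (2 * a + 1))) : ℕ)
            < 2 * a + 1 by simp only [RzAux.valmk]; omega),
        if_neg (show ¬ ((⟨2 * (2 * a + 1) - 1, by omega⟩ : Fin (2 * (2 * a + 1))) : ℕ)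
            = 2 * a + 1 by simp only [RzAux.valmk]; omega)]
      show ((2 * (y : ℝ) - 1) + 1) / 2 = (y : ℝ)
      ring
  obtain ⟨w, hwu, hw0, hw1⟩ :=
    RzAux.perm_path ((RzAux.e0 n₁ a hN).symm.trans (RzAux.e1 n₁ a hN))
  let u : C(I01, Mat (n₁ * (a + 1) * (2 * (2 * a + 1)))) :=
    ⟨fun x => RzAux.U (RzAux.e0 n₁ a hN) * w x,
      continuous_const.matrix_mul (map_continuous w)⟩
  have humem : ∀ x, u x ∈ Matrix.unitaryGroup (Fin (n₁ * (a + 1) * (2 * (2 * a + 1)))) ℂ :=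
    fun x => mul_mem (RzAux.U_mem _) (hwu x)
  have hu0 : u 0 = RzAux.U (RzAux.e0 n₁ a hN) := by
    show RzAux.U (RzAux.e0 n₁ a hN) * w 0 = _
    rw [hw0, mul_one]
  have hu1 : u 1 = RzAux.U (RzAux.e1 n₁ a hN) := by
    show RzAux.U (RzAux.e0 n₁ a hN) * w 1 = _
    rw [hw1, RzAux.U_mul_U]
    congr 1
    rw [← Equiv.trans_assoc, Equiv.self_trans_symm, Equiv.refl_trans]
  have hDcont : ∀ f : C(I01, Mat (n₁ * (a + 1))),
      Continuous fun x => cdiag rfl (fun k => f (ξ k x)) := by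
    intro f
    unfold cdiag
    simp only [Matrix.reindex_apply]
    apply Continuous.matrix_submatrix
    apply Continuous.matrix_blockDiagonal
    exact continuous_pi fun k => (map_continuous f).comp (hξcont k)
  let Φ : C(I01, Mat (n₁ * (a + 1))) → C(I01, Mat (n₁ * (a + 1) * (2 * (2 * a + 1)))) :=
    fun f => ⟨fun x => u x * cdiag rfl (fun k => f (ξ k x)) * star (u x),
      ((map_continuous u).matrix_mul (hDcont f)).matrix_mul
        (map_continuous u).matrix_conjTranspose⟩
  have hΦ : ∀ f x, Φ f x = u x * cdiag rfl (fun k => f (ξ k x)) * star (u x) := fun f x => rfl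
  have humem' : ∀ x, star (u x) * u x = 1 := fun x =>
    Matrix.mem_unitaryGroup_iff'.mp (humem x)
  refine ⟨u, humem, Φ, hΦ, ?_, ?_, ?_, ?_, ?_, ?_, ?_, ?_⟩
  · -- membership
    rintro f ⟨c, hf0, hf1⟩
    refine ⟨RzAux.cp n₁ a (f ω) c, ?_, ?_⟩
    · rw [hΦ, hu0, RzAux.U_conj]
      exact RzAux.key0 n₁ a hN (f ω) c _
        (fun k hk => by rw [hξ0a k hk, hf0])
        (fun k hk => by rw [hξ0b k hk])
    · rw [hΦ, hu1, RzAux.U_conj]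
      exact RzAux.key1 n₁ a hN (f ω) c _
        (fun k hk => by rw [hξ1a k hk])
        (fun k hk => by rw [hξ1b k hk, hf1])
  · -- add
    intro f g _ _
    apply ContinuousMap.ext; intro x
    rw [ContinuousMap.add_apply, hΦ, hΦ, hΦ]
    rw [show (fun k => (f + g) (ξ k x)) = fun k => f (ξ k x) + g (ξ k x) from rfl,
      ← RzAux.cdiag_add, Matrix.mul_add, Matrix.add_mul]
  · -- smul
    intro z f _
    apply ContinuousMap.ext; intro x
    rw [ContinuousMap.smul_apply, hΦ, hΦ]
    rw [show (fun k => (z • f) (ξ k x)) = fun k => z • f (ξ k x) from rfl,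
      ← RzAux.cdiag_smul, Matrix.mul_smul, Matrix.smul_mul]
  · -- mul
    intro f g _ _
    apply ContinuousMap.ext; intro x
    rw [ContinuousMap.mul_apply, hΦ, hΦ, hΦ]
    rw [show (fun k => (f * g) (ξ k x)) = fun k => f (ξ k x) * g (ξ k x) from rfl,
      ← RzAux.cdiag_mul]
    calc u x * (cdiag rfl (fun k => f (ξ k x)) * cdiag rfl (fun k => g (ξ k x))) * star (u x)
        = u x * (cdiag rfl (fun k => f (ξ k x)) * ((star (u x) * u x)
            * (cdiag rfl (fun k => g (ξ k x)) * star (u x)))) := by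
          rw [humem' x, one_mul]
          simp only [Matrix.mul_assoc]
      _ = (u x * cdiag rfl (fun k => f (ξ k x)) * star (u x))
            * (u x * cdiag rfl (fun k => g (ξ k x)) * star (u x)) := by
          simp only [Matrix.mul_assoc]
  · -- star
    intro f _
    apply ContinuousMap.ext; intro x
    rw [ContinuousMap.star_apply, hΦ, hΦ]
    rw [show (fun k => (star f) (ξ k x)) = fun k => star (f (ξ k x)) from rfl,
      ← RzAux.cdiag_star]
    simp only [star_mul, star_star, Matrix.mul_assoc]
  · -- injective
    intro f g _ _ h
    apply ContinuousMap.ext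
    intro y
    obtain ⟨k, x, hkx⟩ := hcover y
    have hx : u x * cdiag rfl (fun k => f (ξ k x)) * star (u x)
        = u x * cdiag rfl (fun k => g (ξ k x)) * star (u x) := by
      rw [← hΦ, ← hΦ, h]
    have hD := RzAux.cdiag_inj rfl (RzAux.conj_cancel (u x) (humem' x) hx)
    rw [← hkx]
    exact congrFun hD k
  · -- variation
    intro k x y
    rw [hξ k x, hξ k y]
    have h1 := x.2.1; have h2 := x.2.2; have h3 := y.2.1; have h4 := y.2.2
    split_ifs <;> (rw [abs_le]; constructor <;> linarith)
  · -- coverage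
    rw [Set.eq_univ_iff_forall]
    intro y
    rw [Set.mem_iUnion]
    obtain ⟨k, x, hkx⟩ := hcover y
    exact ⟨k, x, hkx⟩
end
end
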